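/- arXiv:1703.03280 — 10 statements merged into one kernel-verified Lean document; each statement's English description precedes it below -/
import Mathlib

section
/- Let (λ_k)_{k≥0} be a sequence of positive real numbers and (f_k)_{k≥0} a sequence of nonzero complex numbers with −log|f_k| → +∞ as k → ∞, and suppose h = limsup_{k→∞} (log k)/(−log|f_k|) satisfies 0 ≤ h < 1. Then for every real number x with x/(1−h) < α₀ = liminf_{k→∞} (−log|f_k|)/λ_k (inequality in the extended reals), the series ∑_{k=0}^∞ |f_k| e^{xλ_k} converges; that is, the abscissa of absolute convergence of ∑ f_k e^{zλ_k} is at least (1−h)·α₀. -/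
/-- If `−log|f_k| → +∞` and `h = limsup (log k)/(−log|f_k|)` satisfies `0 ≤ h < 1`, then the
Dirichlet series converges absolutely at every real `x` with `x/(1−h) < α₀`; i.e. the abscissa
of absolute convergence is at least `(1−h)·α₀`. -/
theorem stmt_5 (l : ℕ → ℝ) (hl : ∀ k, 0 < l k)
    (f : ℕ → ℂ) (hf : ∀ k, f k ≠ 0)
    (hf0 : Filter.Tendsto (fun k => -Real.log (‖f k‖)) Filter.atTop Filter.atTop)
    (h : ℝ)
    (hh : Filter.limsup
        (fun k : ℕ => ((Real.log k / (-Real.log (‖f k‖)) : ℝ) : EReal))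
        Filter.atTop = (h : EReal))
    (hh0 : 0 ≤ h) (hh1 : h < 1)
    (x : ℝ)
    (hx : ((x / (1 - h) : ℝ) : EReal)
      < Filter.liminf
          (fun k => ((-Real.log (‖f k‖) / l k : ℝ) : EReal)) Filter.atTop) :
    Summable (fun k => ‖f k‖ * Real.exp (x * l k)) := by
  have h1h : (0:ℝ) < 1 - h := by linarith
  have hapos : ∀ᶠ k in Filter.atTop, 0 < -Real.log (‖f k‖) :=
    hf0.eventually_gt_atTop 0
  -- Step 1: find δ with h < δ and eventual bound x * l k - a k ≤ -δ * a k
  obtain ⟨δ, hδh, hδbound⟩ :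
      ∃ δ : ℝ, h < δ ∧ ∀ᶠ k in Filter.atTop,
        x * l k - (-Real.log (‖f k‖)) ≤ -δ * (-Real.log (‖f k‖)) := by
    rcases le_or_gt x 0 with hx0 | hx0
    · refine ⟨1, hh1, ?_⟩
      filter_upwards [hapos] with k hk
      have hxl : x * l k ≤ 0 := mul_nonpos_of_nonpos_of_nonneg hx0 (hl k).le
      nlinarith
    · obtain ⟨c', hc1, hc2⟩ := EReal.exists_between_coe_real hx
      rw [EReal.coe_lt_coe_iff] at hc1
      have hc'pos : 0 < c' := lt_of_le_of_lt (div_nonneg hx0.le h1h.le) hc1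
      have hev : ∀ᶠ k in Filter.atTop,
          (c' : EReal) < ((-Real.log (‖f k‖) / l k : ℝ) : EReal) :=
        Filter.eventually_lt_of_lt_liminf hc2
      refine ⟨1 - x / c', by
        rw [div_lt_iff₀ h1h] at hc1
        have : x / c' < 1 - h := by
          rw [div_lt_iff₀ hc'pos]; nlinarith
        linarith, ?_⟩
      filter_upwards [hev] with k hk
      rw [EReal.coe_lt_coe_iff, lt_div_iff₀ (hl k)] at hk
      have hlk : l k < (-Real.log (‖f k‖)) / c' := by
        rw [lt_div_iff₀ hc'pos]; linarith [mul_comm c' (l k)]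
      have : x * l k ≤ x / c' * (-Real.log (‖f k‖)) := by
        rw [div_mul_eq_mul_div, mul_div_assoc]
        exact (mul_lt_mul_of_pos_left hlk hx0).le
      nlinarith
  have hδpos : 0 < δ := lt_of_le_of_lt hh0 hδh
  -- Step 2: log k ≤ q * a k eventually, where q = (h+δ)/2
  set q : ℝ := (h + δ) / 2 with hq
  have hqpos : 0 < q := by positivity
  have hqδ : q < δ := by simp only [hq]; linarith
  have hhq : h < q := by simp only [hq]; linarith
  have hlog : ∀ᶠ k : ℕ in Filter.atTop,
      Real.log k ≤ q * (-Real.log (‖f k‖)) := by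
    have : ∀ᶠ k : ℕ in Filter.atTop,
        ((Real.log k / (-Real.log (‖f k‖)) : ℝ) : EReal) < (q : EReal) := by
      exact Filter.eventually_lt_of_limsup_lt (by rw [hh]; exact_mod_cast hhq)
    filter_upwards [this, hapos] with k hk hk2
    rw [EReal.coe_lt_coe_iff, div_lt_iff₀ hk2] at hk
    nlinarith
  -- Step 3: comparison with k ^ (-(δ/q))
  set p : ℝ := δ / q with hp
  have hp1 : 1 < p := (one_lt_div hqpos).mpr hqδ
  have hsum : Summable (fun k : ℕ => (k : ℝ) ^ (-p)) :=
    Real.summable_nat_rpow.mpr (by linarith)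
  apply summable_of_isBigO_nat hsum
  apply Asymptotics.IsBigO.of_bound 1
  filter_upwards [hδbound, hlog, hapos, Filter.eventually_ge_atTop 1] with k hb hlg hap hk1
  have hkpos : (0:ℝ) < k := by exact_mod_cast hk1
  have hterm : ‖f k‖ * Real.exp (x * l k)
      = Real.exp (x * l k - (-Real.log (‖f k‖))) := by
    rw [sub_neg_eq_add, Real.exp_add, Real.exp_log (norm_pos_iff.mpr (hf k)),
      mul_comm]
  have hrw : (k : ℝ) ^ (-p) = Real.exp (-p * Real.log k) := by
    rw [Real.rpow_def_of_pos hkpos]; ring_nf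
  have hexp : x * l k - (-Real.log (‖f k‖)) ≤ -p * Real.log k := by
    have h1 : p * Real.log k ≤ δ * (-Real.log (‖f k‖)) := by
      have : p * Real.log k ≤ p * (q * (-Real.log (‖f k‖))) :=
        mul_le_mul_of_nonneg_left hlg (by positivity)
      calc p * Real.log k ≤ p * (q * (-Real.log (‖f k‖))) := this
        _ = δ * (-Real.log (‖f k‖)) := by
            rw [hp, ← mul_assoc, div_mul_cancel₀ δ hqpos.ne']
    linarith
  rw [Real.norm_eq_abs, Real.norm_eq_abs, one_mul]
  rw [abs_of_nonneg (by positivity), abs_of_nonneg (Real.rpow_nonneg hkpos.le _)]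
  rw [hterm, hrw]
  exact Real.exp_le_exp.mpr hexp
end

section
/- Let (Ω, 𝒜, P) be a probability space, (λ_k)_{k≥0} a sequence of positive real-valued random variables, (Z_k)_{k≥0} a sequence of complex-valued random variables, and (a_k)_{k≥0} a sequence of nonzero complex numbers. Assume that almost surely: limsup_{k→∞} (log k)/λ_k(ω) < +∞, liminf_{k→∞} (−log|Z_k(ω)|)/λ_k(ω) > −∞, and liminf_{k→∞} (−log|a_k|)/λ_k(ω) = +∞. Then almost surely, for every real x the series ∑_{k=0}^∞ |a_k Z_k(ω)| e^{xλ_k(ω)} converges; that is, the abscissa of absolute convergence of ∑ a_k Z_k(ω) e^{zλ_k(ω)} equals +∞ almost surely. -/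
set_option maxHeartbeats 1000000


/-- Random Dirichlet series `∑ a_k Z_k(ω) e^{zλ_k(ω)}`: if almost surely
`limsup (log k)/λ_k(ω) < +∞`, `liminf (−log|Z_k(ω)|)/λ_k(ω) > −∞` and
`liminf (−log|a_k|)/λ_k(ω) = +∞`, then almost surely the series converges absolutely at
every real `x`; i.e. the abscissa of absolute convergence is `+∞` almost surely. -/
theorem stmt_7 {Ω : Type*} [MeasurableSpace Ω] (P : MeasureTheory.Measure Ω)
    [MeasureTheory.IsProbabilityMeasure P]
    (l : ℕ → Ω → ℝ) (hlm : ∀ k, Measurable (l k)) (hlpos : ∀ k ω, 0 < l k ω)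
    (Z : ℕ → Ω → ℂ) (hZm : ∀ k, Measurable (Z k))
    (a : ℕ → ℂ) (ha : ∀ k, a k ≠ 0)
    (htau : ∀ᵐ ω ∂P,
      Filter.limsup (fun k : ℕ => ((Real.log k / l k ω : ℝ) : EReal)) Filter.atTop < ⊤)
    (hZ0 : ∀ᵐ ω ∂P,
      ⊥ < Filter.liminf
          (fun k => ((-Real.log (‖Z k ω‖) / l k ω : ℝ) : EReal)) Filter.atTop)
    (ha0 : ∀ᵐ ω ∂P,
      Filter.liminf
          (fun k => ((-Real.log (‖a k‖) / l k ω : ℝ) : EReal)) Filter.atTop = ⊤) :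
    ∀ᵐ ω ∂P, ∀ x : ℝ,
      Summable (fun k => ‖a k * Z k ω‖ * Real.exp (x * l k ω)) := by
  filter_upwards [htau, hZ0, ha0] with ω hτ hZ hA
  intro x
  obtain ⟨r, hr1, -⟩ := EReal.exists_between_coe_real hτ
  obtain ⟨c, -, hc2⟩ := EReal.exists_between_coe_real hZ
  set τ : ℝ := max r 1 with hτdef
  set M : ℝ := x - c + 2 * τ with hMdef
  have h1 : ∀ᶠ k : ℕ in Filter.atTop, Real.log k / l k ω < r := by
    filter_upwards [Filter.eventually_lt_of_limsup_lt hr1] with k hk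
    exact_mod_cast hk
  have h2 : ∀ᶠ k : ℕ in Filter.atTop,
      c < -Real.log (‖Z k ω‖) / l k ω := by
    filter_upwards [Filter.eventually_lt_of_lt_liminf hc2] with k hk
    exact_mod_cast hk
  have h3 : ∀ᶠ k : ℕ in Filter.atTop,
      M < -Real.log (‖a k‖) / l k ω := by
    have hM : (M : EReal) < Filter.liminf
        (fun k => ((-Real.log (‖a k‖) / l k ω : ℝ) : EReal)) Filter.atTop := by
      rw [hA]; exact EReal.coe_lt_top M
    filter_upwards [Filter.eventually_lt_of_lt_liminf hM] with k hk
    exact_mod_cast hk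
  have hkey : ∀ᶠ k : ℕ in Filter.atTop,
      ‖a k * Z k ω‖ * Real.exp (x * l k ω) ≤ 1 / (k : ℝ) ^ 2 := by
    filter_upwards [h1, h2, h3, Filter.eventually_ge_atTop 1] with k hk1 hk2 hk3 hk4
    have hl := hlpos k ω
    have hk0 : (1 : ℝ) ≤ (k : ℝ) := by exact_mod_cast hk4
    have hlogk : Real.log k < r * l k ω := by
      rw [div_lt_iff₀ hl] at hk1; linarith
    have hτl : Real.log k ≤ τ * l k ω := by
      have : r ≤ τ := le_max_left r 1
      nlinarith
    have hZb : ‖Z k ω‖ ≤ Real.exp (-c * l k ω) := by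
      rcases eq_or_lt_of_le (norm_nonneg (Z k ω)) with h0 | h0
      · rw [← h0]; positivity
      · have hcl : c * l k ω < -Real.log (‖Z k ω‖) := by
          rw [lt_div_iff₀ hl] at hk2; linarith
        calc ‖Z k ω‖
            = Real.exp (Real.log (‖Z k ω‖)) := (Real.exp_log h0).symm
          _ ≤ Real.exp (-c * l k ω) := Real.exp_le_exp.mpr (by linarith)
    have hab : ‖a k‖ ≤ Real.exp (-M * l k ω) := by
      have h0 : 0 < ‖a k‖ := by
        simpa using ha k
      have hMl : M * l k ω < -Real.log (‖a k‖) := by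
        rw [lt_div_iff₀ hl] at hk3; linarith
      calc ‖a k‖
          = Real.exp (Real.log (‖a k‖)) := (Real.exp_log h0).symm
        _ ≤ Real.exp (-M * l k ω) := Real.exp_le_exp.mpr (by linarith)
    have hexp2 : Real.exp (2 * Real.log k) = (k : ℝ) ^ 2 := by
      rw [show (2 : ℝ) * Real.log k = Real.log ((k : ℝ) ^ 2) by
        rw [Real.log_pow]; push_cast; ring]
      exact Real.exp_log (by positivity)
    rw [norm_mul]
    calc ‖a k‖ * ‖Z k ω‖ * Real.exp (x * l k ω)
        ≤ Real.exp (-M * l k ω) * Real.exp (-c * l k ω) * Real.exp (x * l k ω) := by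
          gcongr
      _ = Real.exp (-(2 * τ) * l k ω) := by
          rw [← Real.exp_add, ← Real.exp_add, hMdef]; ring_nf
      _ ≤ Real.exp (-(2 * Real.log k)) := by
          apply Real.exp_le_exp.mpr; nlinarith
      _ = 1 / (k : ℝ) ^ 2 := by
          rw [Real.exp_neg, hexp2, one_div]
  obtain ⟨N, hN⟩ := Filter.eventually_atTop.mp hkey
  rw [← summable_nat_add_iff N]
  refine Summable.of_nonneg_of_le (fun k => by positivity)
    (fun k => hN (k + N) (Nat.le_add_left N k)) ?_
  exact (summable_nat_add_iff N).mpr (Real.summable_one_div_nat_pow.mpr one_lt_two)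
end

section
/- Let (Ω, 𝒜, P) be a probability space and (λ_k)_{k≥0} a sequence of pairwise independent positive real-valued random variables, and let (f_k)_{k≥0} be nonzero complex numbers with (log k)/(log|f_k|) → 0 as k → ∞. Let ρ ∈ (0, +∞), and assume that for almost every ω, for every real x < ρ the series ∑_{k=0}^∞ |f_k| e^{xλ_k(ω)} converges (i.e. the abscissa of absolute convergence σ(f,ω) ≥ ρ a.s.). Then for every ε ∈ (0, ρ): ∑_{k=0}^∞ P{ω : λ_k(ω) ≥ (log|f_k|)/(ε − ρ)} < +∞. -/
open MeasureTheory ProbabilityTheory Filter Set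
open scoped ENNReal NNReal

/-- Dirichlet series with pairwise independent random exponents: if the abscissa of absolute
convergence satisfies `σ(f,ω) ≥ ρ > 0` almost surely, then for every `ε ∈ (0, ρ)` the series
`∑_k P{ω : λ_k(ω) ≥ (log|f_k|)/(ε − ρ)}` converges. -/
theorem stmt_8 {Ω : Type*} [MeasurableSpace Ω] (P : MeasureTheory.Measure Ω)
    [MeasureTheory.IsProbabilityMeasure P]
    (l : ℕ → Ω → ℝ) (hlm : ∀ k, Measurable (l k)) (hlpos : ∀ k ω, 0 < l k ω)
    (hindep : Pairwise (fun i j => ProbabilityTheory.IndepFun (l i) (l j) P))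
    (f : ℕ → ℂ) (hf : ∀ k, f k ≠ 0)
    (hcoef : Filter.Tendsto
      (fun k : ℕ => Real.log k / Real.log (‖f k‖)) Filter.atTop (nhds 0))
    (ρ : ℝ) (hρ : 0 < ρ)
    (hconv : ∀ᵐ ω ∂P, ∀ x : ℝ, x < ρ →
      Summable (fun k => ‖f k‖ * Real.exp (x * l k ω))) :
    ∀ ε : ℝ, 0 < ε → ε < ρ →
      (∑' k : ℕ, P {ω | Real.log (‖f k‖) / (ε - ρ) ≤ l k ω}) < ⊤ := by
  intro ε hε hερ
  by_contra hcontra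
  set c : ℕ → ℝ := fun k => Real.log (‖f k‖) / (ε - ρ) with hc
  set A : ℕ → Set Ω := fun k => {ω | c k ≤ l k ω} with hAdef
  have htop : (∑' k : ℕ, P (A k)) = ⊤ := top_le_iff.mp (not_lt.mp hcontra)
  have hA : ∀ k, MeasurableSet (A k) := fun k => measurableSet_le measurable_const (hlm k)
  -- indicator random variables
  set X : ℕ → Ω → ℝ := fun k => (A k).indicator (fun _ => (1 : ℝ)) with hXdef
  have hXnonneg : ∀ k ω, 0 ≤ X k ω := fun k ω => Set.indicator_nonneg (fun _ _ => zero_le_one) ω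
  have hXmeas : ∀ k, Measurable (X k) := fun k => (measurable_const.indicator (hA k))
  have hXindep : Pairwise fun i j => IndepFun (X i) (X j) P := by
    intro i j hij
    have h1 : ∀ k, X k = (Set.indicator (Set.Ici (c k)) (fun _ => (1:ℝ))) ∘ l k := by
      intro k
      funext ω
      by_cases h : c k ≤ l k ω <;>
        simp [hXdef, Set.indicator_apply, Set.mem_Ici, h, hAdef]
    rw [h1 i, h1 j]
    exact (hindep hij).comp (measurable_const.indicator measurableSet_Ici)
      (measurable_const.indicator measurableSet_Ici)
  have hXmem : ∀ k, MemLp (X k) 2 P :=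
    fun k => memLp_indicator_const 2 (hA k) 1 (Or.inr (measure_ne_top P _))
  set p : ℕ → ℝ := fun k => (P (A k)).toReal with hpdef
  have hpnonneg : ∀ k, 0 ≤ p k := fun k => ENNReal.toReal_nonneg
  have hEX : ∀ k, ∫ ω, X k ω ∂P = p k := by
    intro k
    simp [hXdef, integral_indicator_const (1:ℝ) (hA k), hpdef, Measure.real]
  have hVar : ∀ k, variance (X k) P ≤ p k := by
    intro k
    have hsq : (X k) ^ 2 = X k := by
      funext ω
      by_cases h : ω ∈ A k <;> simp [hXdef, h]
    rw [variance_eq_sub (hXmem k), hsq]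
    simp only [hEX k]
    nlinarith [sq_nonneg (p k)]
  set m : ℕ → ℝ := fun n => ∑ k ∈ Finset.range n, p k with hmdef
  have hmnonneg : ∀ n, 0 ≤ m n := fun n => Finset.sum_nonneg fun k _ => hpnonneg k
  -- m n can be made arbitrarily large
  have hm : ∀ R : ℝ, ∃ n, R ≤ m n := by
    intro R
    by_contra hR
    push_neg at hR
    have hR0 : 0 ≤ R := le_of_lt (lt_of_le_of_lt (hmnonneg 0) (hR 0))
    have hbound : ∀ n, ∑ k ∈ Finset.range n, P (A k) ≤ ENNReal.ofReal R := by
      intro n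
      have hne : (∑ k ∈ Finset.range n, P (A k)) ≠ ⊤ :=
        (ENNReal.sum_lt_top.mpr fun k _ => measure_lt_top P _).ne
      rw [ENNReal.le_ofReal_iff_toReal_le hne hR0,
        ENNReal.toReal_sum (fun k _ => (measure_lt_top P _).ne)]
      exact (hR n).le
    have h2 := ENNReal.tsum_le_of_sum_range_le hbound
    rw [htop] at h2
    exact (not_le.mpr ENNReal.ofReal_lt_top) h2
  -- partial sums and their statistics
  set S : ℕ → Ω → ℝ := fun n => ∑ k ∈ Finset.range n, X k with hSdef
  have hSmem : ∀ n, MemLp (S n) 2 P :=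
    fun n => memLp_finset_sum' _ fun k _ => hXmem k
  have hES : ∀ n, ∫ ω, S n ω ∂P = m n := by
    intro n
    have : ∫ ω, (∑ k ∈ Finset.range n, X k) ω ∂P
        = ∑ k ∈ Finset.range n, ∫ ω, X k ω ∂P := by
      simp only [Finset.sum_apply]
      exact integral_finset_sum _ fun k _ => (hXmem k).integrable one_le_two
    rw [hSdef]
    simp only [this, hEX, hmdef]
  have hVarS : ∀ n, variance (S n) P ≤ m n := by
    intro n
    rw [hSdef]
    rw [IndepFun.variance_sum (fun k _ => hXmem k)
      (fun i _ j _ hij => hXindep hij)]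
    exact Finset.sum_le_sum fun k _ => hVar k
  -- the unbounded event has full measure
  set B : ℕ → Set Ω := fun M => {ω | ∃ n, (M : ℝ) ≤ S n ω} with hBdef
  have hBcompl : ∀ M : ℕ, P (B M)ᶜ = 0 := by
    intro M
    have key : ∀ δ : ℝ, 0 < δ → P (B M)ᶜ ≤ ENNReal.ofReal δ := by
      intro δ hδ
      obtain ⟨n, hn⟩ := hm (max (max (2 * M) 1) (4 / δ))
      have hm1 : (1 : ℝ) ≤ m n := le_trans (le_max_of_le_left (le_max_right _ _)) hn
      have hm0 : 0 < m n := lt_of_lt_of_le one_pos hm1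
      have hm2M : 2 * (M : ℝ) ≤ m n := le_trans (le_max_of_le_left (le_max_left _ _)) hn
      have hm4δ : 4 / δ ≤ m n := le_trans (le_max_right _ _) hn
      -- Chebyshev at time n
      have hcheb := meas_ge_le_variance_div_sq (μ := P) (hSmem n) (c := m n / 2) (by linarith)
      rw [hES n] at hcheb
      have hsub : (B M)ᶜ ⊆ {ω | m n / 2 ≤ |S n ω - m n|} := by
        intro ω hω
        simp only [hBdef, Set.mem_compl_iff, Set.mem_setOf_eq, not_exists, not_le] at hω
        have h1 : S n ω < M := hω n
        have h2 : m n - S n ω > m n / 2 := by linarith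
        simp only [Set.mem_setOf_eq]
        rw [abs_sub_comm]
        calc m n / 2 ≤ m n - S n ω := h2.le
          _ ≤ |m n - S n ω| := le_abs_self _
      calc P (B M)ᶜ ≤ P {ω | m n / 2 ≤ |S n ω - m n|} := measure_mono hsub
        _ ≤ ENNReal.ofReal (variance (S n) P / (m n / 2) ^ 2) := hcheb
        _ ≤ ENNReal.ofReal δ := by
            apply ENNReal.ofReal_le_ofReal
            have h1 : variance (S n) P / (m n / 2) ^ 2 ≤ m n / (m n / 2) ^ 2 := by
              apply div_le_div_of_nonneg_right (hVarS n) (by positivity) |>.trans_eq rfl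
            have h2 : m n / (m n / 2) ^ 2 = 4 / m n := by
              field_simp; ring
            rw [h2] at h1
            refine h1.trans ?_
            rw [div_le_iff₀ hm0]
            calc (4 : ℝ) = δ * (4 / δ) := by field_simp
              _ ≤ δ * m n := by
                  exact mul_le_mul_of_nonneg_left hm4δ hδ.le
    have h0 : P (B M)ᶜ ≤ 0 := by
      refine ENNReal.le_of_forall_pos_le_add fun η hη _ => ?_
      rw [zero_add]
      exact (key η (by exact_mod_cast hη)).trans_eq ENNReal.ofReal_coe_nnreal
    exact le_antisymm h0 (zero_le)
  -- almost surely the partial sums are bounded, so ⋂ M, B M is null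
  have hnull : P (⋂ M : ℕ, B M) = 0 := by
    rw [← nonpos_iff_eq_zero]
    have hsub : (⋂ M : ℕ, B M) ⊆
        {ω | ¬ ∀ x : ℝ, x < ρ → Summable (fun k => ‖f k‖ * Real.exp (x * l k ω))} := by
      intro ω hω
      simp only [Set.mem_setOf_eq]
      intro hsum
      have hsum' := hsum (ρ - ε) (by linarith)
      set C : ℝ := ∑' k, ‖f k‖ * Real.exp ((ρ - ε) * l k ω) with hCdef
      -- each X k ω is dominated by the k-th term
      have hterm : ∀ k, X k ω ≤ ‖f k‖ * Real.exp ((ρ - ε) * l k ω) := by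
        intro k
        by_cases h : ω ∈ A k
        · have hlk : c k ≤ l k ω := h
          have hεdebρ : ε - ρ < 0 := by linarith
          rw [hc] at hlk
          have hlog : l k ω * (ε - ρ) ≤ Real.log (‖f k‖) :=
            (div_le_iff_of_neg hεdebρ).mp hlk
          have habs : (0:ℝ) < ‖f k‖ := by
            simpa using (norm_pos_iff.mpr (hf k))
          have : (1:ℝ) ≤ ‖f k‖ * Real.exp ((ρ - ε) * l k ω) := by
            rw [← Real.exp_log habs, ← Real.exp_add]
            rw [show (1:ℝ) = Real.exp 0 from (Real.exp_zero).symm]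
            apply Real.exp_le_exp.mpr
            nlinarith [hlog]
          calc X k ω ≤ 1 := by simp [hXdef, h]
            _ ≤ _ := this
        · have : X k ω = 0 := by simp [hXdef, h]
          rw [this]
          positivity
      have hSle : ∀ n, S n ω ≤ C := by
        intro n
        have : S n ω = ∑ k ∈ Finset.range n, X k ω := by simp [hSdef]
        rw [this, hCdef]
        calc ∑ k ∈ Finset.range n, X k ω
            ≤ ∑ k ∈ Finset.range n, ‖f k‖ * Real.exp ((ρ - ε) * l k ω) :=
              Finset.sum_le_sum fun k _ => hterm k
          _ ≤ _ := Summable.sum_le_tsum _ (fun k _ => by positivity) hsum'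
      obtain ⟨M, hM⟩ := exists_nat_gt C
      have hωM : ω ∈ B M := Set.mem_iInter.mp hω M
      obtain ⟨n, hn⟩ := hωM
      linarith [hSle n]
    calc P (⋂ M : ℕ, B M) ≤ P {ω | ¬ ∀ x : ℝ, x < ρ →
          Summable (fun k => ‖f k‖ * Real.exp (x * l k ω))} := measure_mono hsub
      _ = 0 := hconv
  -- but the complement of ⋂ M, B M is also null: contradiction
  have hone : (1 : ℝ≥0∞) ≤ P (⋂ M : ℕ, B M) + P (⋂ M : ℕ, B M)ᶜ := by
    calc (1 : ℝ≥0∞) = P Set.univ := (measure_univ).symm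
      _ = P ((⋂ M : ℕ, B M) ∪ (⋂ M : ℕ, B M)ᶜ) := by rw [Set.union_compl_self]
      _ ≤ _ := measure_union_le _ _
  have hcomplnull : P (⋂ M : ℕ, B M)ᶜ = 0 := by
    rw [Set.compl_iInter]
    rw [← nonpos_iff_eq_zero]
    calc P (⋃ M : ℕ, (B M)ᶜ) ≤ ∑' M : ℕ, P (B M)ᶜ := measure_iUnion_le _
      _ = 0 := by simp [hBcompl]
  rw [hnull, hcomplnull] at hone
  simp at hone
end

section
/- Let (Ω, 𝒜, P) be a probability space and (λ_k)_{k≥0} a sequence of pairwise independent positive real-valued random variables, and let (f_k)_{k≥0} be nonzero complex numbers with (log k)/(log|f_k|) → 0 as k → ∞. Let ρ ∈ (−∞, 0], and assume that for almost every ω: for every real x < ρ the series ∑_{k=0}^∞ |f_k| e^{xλ_k(ω)} converges, and for every real x > 0 the series ∑_{k=0}^∞ |f_k| e^{xλ_k(ω)} diverges (i.e. ρ ≤ σ(f,ω) ≤ 0 a.s., where σ is the abscissa of absolute convergence). Then for every ε > 0: ∑_{k=0}^∞ P{ω : λ_k(ω) < (log|f_k|)/(ε − ρ)} < +∞. -/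
open MeasureTheory ProbabilityTheory Filter
open scoped ENNReal NNReal

/-- Dirichlet series with pairwise independent random exponents: if the abscissa of absolute
convergence satisfies `ρ ≤ σ(f,ω) ≤ 0` almost surely (with `ρ ≤ 0`), then for every `ε > 0`
the series `∑_k P{ω : λ_k(ω) < (log|f_k|)/(ε − ρ)}` converges. -/
theorem stmt_9 {Ω : Type*} [MeasurableSpace Ω] (P : MeasureTheory.Measure Ω)
    [MeasureTheory.IsProbabilityMeasure P]
    (l : ℕ → Ω → ℝ) (hlm : ∀ k, Measurable (l k)) (hlpos : ∀ k ω, 0 < l k ω)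
    (hindep : Pairwise (fun i j => ProbabilityTheory.IndepFun (l i) (l j) P))
    (f : ℕ → ℂ) (hf : ∀ k, f k ≠ 0)
    (hcoef : Filter.Tendsto
      (fun k : ℕ => Real.log k / Real.log (‖f k‖)) Filter.atTop (nhds 0))
    (ρ : ℝ) (hρ : ρ ≤ 0)
    (habs : ∀ᵐ ω ∂P,
      (∀ x : ℝ, x < ρ → Summable (fun k => ‖f k‖ * Real.exp (x * l k ω))) ∧
      (∀ x : ℝ, 0 < x → ¬ Summable (fun k => ‖f k‖ * Real.exp (x * l k ω)))) :
    ∀ ε : ℝ, 0 < ε →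
      (∑' k : ℕ, P {ω | l k ω < Real.log (‖f k‖) / (ε - ρ)}) < ⊤ := by
  classical
  intro ε hε
  by_contra hcon
  push_neg at hcon
  set c : ℕ → ℝ := fun k => Real.log (‖f k‖) / (ε - ρ) with hc
  set A : ℕ → Set Ω := fun k => {ω | l k ω < c k} with hA
  have htop : (∑' k, P (A k)) = ⊤ := top_le_iff.mp hcon
  have hAm : ∀ k, MeasurableSet (A k) := fun k => (hlm k) measurableSet_Iio
  -- indicator random variables
  set g : ℕ → ℝ → ℝ := fun k => (Set.Iio (c k)).indicator (fun _ => (1:ℝ)) with hg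
  have hgm : ∀ k, Measurable (g k) := fun k => measurable_const.indicator measurableSet_Iio
  set Y : ℕ → Ω → ℝ := fun k => g k ∘ l k with hY
  have hYval : ∀ k ω, Y k ω = if l k ω < c k then (1:ℝ) else 0 := by
    intro k ω
    by_cases h : l k ω < c k <;> simp [hY, hg, Set.indicator, h, Function.comp]
  have hYm : ∀ k, Measurable (Y k) := fun k => (hgm k).comp (hlm k)
  have hYbd : ∀ k ω, ‖Y k ω‖ ≤ 1 := by
    intro k ω; rw [hYval]
    by_cases h : l k ω < c k <;> simp [h]
  have hYL2 : ∀ k, MeasureTheory.MemLp (Y k) 2 P :=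
    fun k => MeasureTheory.MemLp.of_bound ((hYm k).aestronglyMeasurable) 1
      (Filter.Eventually.of_forall (hYbd k))
  have hYint : ∀ k, ∫ ω, Y k ω ∂P = (P (A k)).toReal := by
    intro k
    have : (fun ω => Y k ω) = (A k).indicator (fun _ => (1:ℝ)) := by
      funext ω
      by_cases h : l k ω < c k <;>
        simp [hYval, Set.indicator, hA, Set.mem_setOf_eq, h]
    rw [this, MeasureTheory.integral_indicator_const (1:ℝ) (hAm k)]
    simp [Measure.real]
  have hYsq : ∀ k ω, Y k ω ^ 2 = Y k ω := by
    intro k ω; rw [hYval]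
    by_cases h : l k ω < c k <;> simp [h]
  have hvar : ∀ k, ProbabilityTheory.variance (Y k) P ≤ (P (A k)).toReal := by
    intro k
    calc ProbabilityTheory.variance (Y k) P ≤ ∫ ω, (Y k ^ 2) ω ∂P :=
          variance_le_expectation_sq (hYm k).aestronglyMeasurable
    _ = ∫ ω, Y k ω ∂P := by
          refine integral_congr_ae (Filter.Eventually.of_forall fun ω => ?_)
          simpa using hYsq k ω
    _ = (P (A k)).toReal := hYint k
  have hYindep : ∀ i j, i ≠ j → ProbabilityTheory.IndepFun (Y i) (Y j) P :=
    fun i j hij => (hindep hij).comp (hgm i) (hgm j)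
  -- divergence of partial sums on tails
  have hple : ∀ k, P (A k) ≤ 1 := fun k => prob_le_one
  have hdiv : ∀ (m : ℕ) (C : ℝ), ∃ n, m ≤ n ∧
      C ≤ ∑ k ∈ Finset.Ico m n, (P (A k)).toReal := by
    intro m C
    have h1 : Filter.Tendsto (fun n => ∑ k ∈ Finset.range n, P (A k)) Filter.atTop (nhds ⊤) := by
      rw [← htop]; exact ENNReal.tendsto_nat_tsum _
    have hlt : ENNReal.ofReal C + (m : ℝ≥0∞) < ⊤ :=
      ENNReal.add_lt_top.2 ⟨ENNReal.ofReal_lt_top, ENNReal.natCast_lt_top m⟩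
    have h2 := (h1.eventually (eventually_gt_nhds hlt)).and (Filter.eventually_ge_atTop m)
    obtain ⟨n, hn, hmn⟩ := h2.exists
    refine ⟨n, hmn, ?_⟩
    have hsplit : ∑ k ∈ Finset.range m, P (A k) + ∑ k ∈ Finset.Ico m n, P (A k)
        = ∑ k ∈ Finset.range n, P (A k) := Finset.sum_range_add_sum_Ico _ hmn
    have hrm : ∑ k ∈ Finset.range m, P (A k) ≤ (m : ℝ≥0∞) := by
      calc ∑ k ∈ Finset.range m, P (A k) ≤ ∑ _k ∈ Finset.range m, (1 : ℝ≥0∞) :=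
            Finset.sum_le_sum fun k _ => hple k
      _ = (m : ℝ≥0∞) := by simp
    have hlt2 : ENNReal.ofReal C + (m : ℝ≥0∞)
        < ∑ k ∈ Finset.Ico m n, P (A k) + (m : ℝ≥0∞) := by
      calc ENNReal.ofReal C + (m : ℝ≥0∞) < ∑ k ∈ Finset.range n, P (A k) := hn
      _ = ∑ k ∈ Finset.range m, P (A k) + ∑ k ∈ Finset.Ico m n, P (A k) := hsplit.symm
      _ ≤ (m : ℝ≥0∞) + ∑ k ∈ Finset.Ico m n, P (A k) := add_le_add_left hrm _
      _ = ∑ k ∈ Finset.Ico m n, P (A k) + (m : ℝ≥0∞) := add_comm _ _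
    have hltC : ENNReal.ofReal C < ∑ k ∈ Finset.Ico m n, P (A k) :=
      (ENNReal.add_lt_add_iff_right (ENNReal.natCast_ne_top m)).1 hlt2
    have hTne : ∑ k ∈ Finset.Ico m n, P (A k) ≠ ⊤ := by
      refine ne_top_of_le_ne_top ?_ (Finset.sum_le_sum fun k _ => hple k)
      simp
    have heq : (∑ k ∈ Finset.Ico m n, P (A k)).toReal
        = ∑ k ∈ Finset.Ico m n, (P (A k)).toReal :=
      ENNReal.toReal_sum fun k _ => ne_top_of_le_ne_top (by simp) (hple k)
    rcases le_or_gt C 0 with hC | hC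
    · exact hC.trans (Finset.sum_nonneg fun k _ => ENNReal.toReal_nonneg)
    · have := (ENNReal.ofReal_lt_iff_lt_toReal hC.le hTne).1 hltC
      rw [heq] at this
      exact this.le
  -- each tail union has full measure
  set B : ℕ → Set Ω := fun m => ⋃ k, ⋃ (_ : m ≤ k), A k with hB
  have hBfull : ∀ m, P ((B m)ᶜ) = 0 := by
    intro m
    have key : ∀ δ : ℝ, 0 < δ → P ((B m)ᶜ) ≤ ENNReal.ofReal δ := by
      intro δ hδ
      obtain ⟨n, hmn, hS⟩ := hdiv m (max (4 / δ) 1)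
      set S : ℝ := ∑ k ∈ Finset.Ico m n, (P (A k)).toReal with hSdef
      have hS1 : (1:ℝ) ≤ S := le_trans (le_max_right _ _) hS
      have hS0 : (0:ℝ) < S := lt_of_lt_of_le one_pos hS1
      set X : Ω → ℝ := fun ω => ∑ k ∈ Finset.Ico m n, Y k ω with hX
      have hXL2 : MeasureTheory.MemLp X 2 P := by
        have := memLp_finset_sum' (μ := P) (Finset.Ico m n) (f := Y) (fun k _ => hYL2 k)
        convert this using 1
        funext ω; simp [hX]
      have hXint : ∫ ω, X ω ∂P = S := by
        rw [hX, MeasureTheory.integral_finset_sum _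
          (fun k _ => (hYL2 k).integrable one_le_two)]
        exact Finset.sum_congr rfl fun k _ => hYint k
      have hXvar : ProbabilityTheory.variance X P ≤ S := by
        have hvs : ProbabilityTheory.variance X P = ∑ k ∈ Finset.Ico m n, ProbabilityTheory.variance (Y k) P := by
          have := IndepFun.variance_sum (μ := P) (X := Y) (s := Finset.Ico m n)
            (fun k _ => hYL2 k) (fun i _ j _ hij => hYindep i j hij)
          convert this using 2
          funext ω; simp [hX]
        rw [hvs]
        exact Finset.sum_le_sum fun k _ => hvar k
      have hcheb : P {ω | S / 2 ≤ |X ω - ∫ a, X a ∂P|}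
          ≤ ENNReal.ofReal (ProbabilityTheory.variance X P / (S / 2) ^ 2) :=
        meas_ge_le_variance_div_sq hXL2 (by positivity)
      have hsub : (B m)ᶜ ⊆ {ω | S / 2 ≤ |X ω - ∫ a, X a ∂P|} := by
        intro ω hω
        have hX0 : X ω = 0 := by
          refine Finset.sum_eq_zero fun k hk => ?_
          rw [hYval]
          rw [if_neg]
          intro hlk
          exact hω (Set.mem_iUnion.2 ⟨k, Set.mem_iUnion.2
            ⟨(Finset.mem_Ico.1 hk).1, hlk⟩⟩)
        simp only [Set.mem_setOf_eq, hX0, hXint, zero_sub, abs_neg, abs_of_pos hS0]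
        linarith
      calc P ((B m)ᶜ) ≤ P {ω | S / 2 ≤ |X ω - ∫ a, X a ∂P|} := measure_mono hsub
      _ ≤ ENNReal.ofReal (ProbabilityTheory.variance X P / (S / 2) ^ 2) := hcheb
      _ ≤ ENNReal.ofReal (S / (S / 2) ^ 2) := by
            apply ENNReal.ofReal_le_ofReal
            apply div_le_div_of_nonneg_right hXvar
            positivity
      _ = ENNReal.ofReal (4 / S) := by congr 1; field_simp; ring
      _ ≤ ENNReal.ofReal δ := by
            apply ENNReal.ofReal_le_ofReal
            rw [div_le_iff₀ hS0]
            calc (4:ℝ) = δ * (4 / δ) := by field_simp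
            _ ≤ δ * S := by
                  apply mul_le_mul_of_nonneg_left _ hδ.le
                  exact le_trans (le_max_left _ _) hS
    have : P ((B m)ᶜ) ≤ 0 := by
      apply ENNReal.le_of_forall_pos_le_add
      intro e he _
      rw [zero_add]
      calc P ((B m)ᶜ) ≤ ENNReal.ofReal e := key e he
      _ = (e : ℝ≥0∞) := ENNReal.ofReal_coe_nnreal
    exact le_antisymm this (zero_le')
  -- pick a good ω
  haveI : (MeasureTheory.ae P).NeBot :=
    MeasureTheory.ae_neBot.2 (MeasureTheory.IsProbabilityMeasure.ne_zero P)
  have haeB : ∀ᵐ ω ∂P, ∀ m : ℕ, ω ∈ B m :=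
    (MeasureTheory.ae_all_iff).2 fun m => (MeasureTheory.mem_ae_iff).2 (hBfull m)
  obtain ⟨ω, ⟨hconv, _⟩, hωB⟩ := (habs.and haeB).exists
  -- derive a contradiction
  have hx : ρ - ε / 2 < ρ := by linarith
  have hsum := hconv _ hx
  have h0 := hsum.tendsto_atTop_zero
  have hev := h0.eventually (eventually_lt_nhds one_pos)
  obtain ⟨m, hm⟩ := Filter.eventually_atTop.1 hev
  obtain ⟨k, hk⟩ := Set.mem_iUnion.1 (hωB m)
  obtain ⟨hkm, hkA⟩ := Set.mem_iUnion.1 hk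
  have hερ : (0:ℝ) < ε - ρ := by linarith
  have hkA' : l k ω * (ε - ρ) < Real.log (‖f k‖) :=
    (lt_div_iff₀ hερ).1 hkA
  have habspos : (0:ℝ) < ‖f k‖ := norm_pos_iff.mpr (hf k)
  have hgt : (1:ℝ) < ‖f k‖ * Real.exp ((ρ - ε / 2) * l k ω) := by
    rw [← Real.exp_log habspos, ← Real.exp_add]
    calc (1:ℝ) = Real.exp 0 := (Real.exp_zero).symm
    _ < Real.exp (Real.log (‖f k‖) + (ρ - ε / 2) * l k ω) := by
        apply Real.exp_lt_exp.2
        nlinarith [hlpos k ω, hkA']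
  exact absurd (hm k hkm) (not_lt.2 hgt.le)
end

section
/- Let (Ω, 𝒜, P) be a probability space and (λ_k)_{k≥0} a sequence of pairwise independent positive real-valued random variables, and let (f_k)_{k≥0} be nonzero complex numbers with (log k)/(log|f_k|) → 0 as k → ∞. Let ρ > 0 and assume that for almost every ω there exists a real x > ρ such that ∑_{k=0}^∞ |f_k| e^{xλ_k(ω)} converges (i.e. the abscissa of absolute convergence σ(f,ω) > ρ a.s.). Then ∑_{k=0}^∞ P{ω : λ_k(ω) ≥ (−log|f_k|)/ρ} < +∞. -/
open MeasureTheory ProbabilityTheory Filter Finset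
open scoped ENNReal NNReal

/-- Dirichlet series with pairwise independent random exponents: if the abscissa of absolute
convergence satisfies `σ(f,ω) > ρ > 0` almost surely, then
`∑_k P{ω : λ_k(ω) ≥ (−log|f_k|)/ρ} < +∞`. -/
theorem stmt_10 {Ω : Type*} [MeasurableSpace Ω] (P : MeasureTheory.Measure Ω)
    [MeasureTheory.IsProbabilityMeasure P]
    (l : ℕ → Ω → ℝ) (hlm : ∀ k, Measurable (l k)) (hlpos : ∀ k ω, 0 < l k ω)
    (hindep : Pairwise (fun i j => ProbabilityTheory.IndepFun (l i) (l j) P))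
    (f : ℕ → ℂ) (hf : ∀ k, f k ≠ 0)
    (hcoef : Filter.Tendsto
      (fun k : ℕ => Real.log k / Real.log (‖f k‖)) Filter.atTop (nhds 0))
    (ρ : ℝ) (hρ : 0 < ρ)
    (hconv : ∀ᵐ ω ∂P, ∃ x : ℝ, ρ < x ∧
      Summable (fun k => ‖f k‖ * Real.exp (x * l k ω))) :
    (∑' k : ℕ, P {ω | -Real.log (‖f k‖) / ρ ≤ l k ω}) < ⊤ := by
  classical
  set a : ℕ → ℝ := fun k => -Real.log (‖f k‖) / ρ with ha
  set A : ℕ → Set Ω := fun k => {ω | a k ≤ l k ω} with hA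
  have hAmeas : ∀ k, MeasurableSet (A k) := fun k => (hlm k) measurableSet_Ici
  -- on `A k`, the `k`-th term is at least 1 for any `x > ρ`
  have hterm : ∀ (k : ℕ) (ω : Ω) (x : ℝ), ρ < x → ω ∈ A k →
      1 ≤ ‖f k‖ * Real.exp (x * l k ω) := by
    intro k ω x hx hω
    have hfk : 0 < ‖f k‖ := by
      simpa using norm_pos_iff.mpr (hf k)
    set g := Real.log (‖f k‖) with hg
    have hl : 0 < l k ω := hlpos k ω
    have habs : ‖f k‖ = Real.exp g := (Real.exp_log hfk).symm
    rw [habs, ← Real.exp_add]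
    have : (0:ℝ) ≤ g + x * l k ω := by
      rcases le_or_gt 0 g with hg0 | hg0
      · nlinarith
      · have hω' : -g / ρ ≤ l k ω := hω
        have : -g ≤ l k ω * ρ := (div_le_iff₀ hρ).mp hω'
        nlinarith
    calc (1:ℝ) = Real.exp 0 := Real.exp_zero.symm
      _ ≤ Real.exp (g + x * l k ω) := Real.exp_le_exp.mpr this
  -- the indicator random variables
  set X : ℕ → Ω → ℝ := fun k => (A k).indicator (fun _ => (1:ℝ)) with hX
  have hXmeas : ∀ k, Measurable (X k) :=
    fun k => measurable_const.indicator (hAmeas k)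
  have hXmem : ∀ k, MemLp (X k) 2 P := fun k =>
    memLp_indicator_const 2 (hAmeas k) 1 (Or.inr (measure_ne_top P _))
  have hXnonneg : ∀ k ω, 0 ≤ X k ω := by
    intro k ω; simp only [hX]; exact Set.indicator_nonneg (fun _ _ => zero_le_one) ω
  have hXle : ∀ k ω, X k ω ≤ 1 := by
    intro k ω; simp only [hX, Set.indicator]; split <;> norm_num
  have hXsq : ∀ k, X k ^ 2 = X k := by
    intro k; funext ω
    simp only [hX, Pi.pow_apply, Set.indicator]; split <;> norm_num
  have hXint : ∀ k, ∫ ω, X k ω ∂P = (P (A k)).toReal := by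
    intro k
    simpa [measureReal_def] using integral_indicator_const (1:ℝ) (hAmeas k) (μ := P)
  -- pairwise independence of the indicators
  have hXindep : Pairwise (fun i j => IndepFun (X i) (X j) P) := by
    intro i j hij
    have : ∀ k, X k = ((Set.Ici (a k)).indicator (fun _ => (1:ℝ))) ∘ l k := by
      intro k; funext ω
      simp only [hX, Function.comp_apply, Set.indicator, Set.mem_Ici, Set.mem_setOf_eq, A]
    rw [this i, this j]
    exact (hindep hij).comp (measurable_const.indicator measurableSet_Ici)
      (measurable_const.indicator measurableSet_Ici)
  -- partial sums of probabilities and of indicators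
  set p : ℕ → ℝ := fun k => (P (A k)).toReal with hp
  set S : ℕ → ℝ := fun n => ∑ k ∈ range n, p k with hS
  set N : ℕ → Ω → ℝ := fun n ω => ∑ k ∈ range n, X k ω with hN
  have hNmeas : ∀ n, Measurable (N n) := by
    intro n; exact Finset.measurable_sum _ fun k _ => hXmeas k
  have hNint : ∀ n, ∫ ω, N n ω ∂P = S n := by
    intro n
    rw [integral_finset_sum _ fun k _ => (hXmem k).integrable one_le_two]
    exact Finset.sum_congr rfl fun k _ => hXint k
  have hNmem : ∀ n, MemLp (N n) 2 P := by
    intro n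
    have h1 : MemLp (∑ k ∈ range n, X k) 2 P := memLp_finset_sum' _ fun k _ => hXmem k
    have heq : N n = ∑ k ∈ range n, X k := by funext ω; simp [hN, Finset.sum_apply]
    rw [heq]; exact h1
  -- variance bound
  have hvar : ∀ n, variance (N n) P ≤ S n := by
    intro n
    have h1 : variance (∑ k ∈ range n, X k) P = ∑ k ∈ range n, variance (X k) P :=
      IndepFun.variance_sum (fun k _ => hXmem k)
        (fun i _ j _ hij => hXindep hij)
    have h2 : ∀ k, variance (X k) P ≤ p k := by
      intro k
      calc variance (X k) P ≤ ∫ ω, (X k ^ 2) ω ∂P :=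
            variance_le_expectation_sq (hXmem k).aestronglyMeasurable
        _ = ∫ ω, X k ω ∂P := by rw [hXsq k]
        _ = p k := hXint k
    have : variance (N n) P = ∑ k ∈ range n, variance (X k) P := by
      rw [← h1]; congr 1; funext ω; simp [hN, Finset.sum_apply]
    rw [this]
    exact Finset.sum_le_sum fun k _ => h2 k
  -- a.s., N n is uniformly bounded
  have hbound : ∀ᵐ ω ∂P, ∃ m : ℕ, ∀ n, N n ω ≤ (m:ℝ) := by
    filter_upwards [hconv] with ω hω
    obtain ⟨x, hx, hsum⟩ := hω
    have h0 : Tendsto (fun k => ‖f k‖ * Real.exp (x * l k ω)) atTop (nhds 0) :=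
      hsum.tendsto_atTop_zero
    have h1 : ∀ᶠ k in atTop, ‖f k‖ * Real.exp (x * l k ω) < 1 :=
      h0.eventually_lt_const one_pos
    obtain ⟨K, hK⟩ := eventually_atTop.mp h1
    have hXzero : ∀ k, K ≤ k → X k ω = 0 := by
      intro k hk
      have : ω ∉ A k := fun hmem => absurd (hterm k ω x hx hmem) (not_le.mpr (hK k hk))
      simp [hX, Set.indicator_of_notMem this]
    refine ⟨K, fun n => ?_⟩
    have hmono : N n ω ≤ N (max n K) ω := by
      apply Finset.sum_le_sum_of_subset_of_nonneg
      · exact Finset.range_subset_range.mpr (le_max_left _ _)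
      · intro k _ _; exact hXnonneg k ω
    have hsplit : N (max n K) ω = N K ω := by
      simp only [hN]
      rw [← Finset.sum_range_add_sum_Ico _ (le_max_right n K)]
      have : ∑ k ∈ Finset.Ico K (max n K), X k ω = 0 :=
        Finset.sum_eq_zero fun k hk => hXzero k (Finset.mem_Ico.mp hk).1
      rw [this, add_zero]
    have hNK : N K ω ≤ (K:ℝ) := by
      calc N K ω ≤ ∑ k ∈ range K, (1:ℝ) := Finset.sum_le_sum fun k _ => hXle k ω
        _ = (K:ℝ) := by simp
    calc N n ω ≤ N (max n K) ω := hmono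
      _ = N K ω := hsplit
      _ ≤ (K:ℝ) := hNK
  -- main argument: suppose the sum is infinite
  by_contra htop
  rw [not_lt, top_le_iff] at htop
  -- partial sums S n are unbounded
  have hSunbdd : ∀ M : ℝ, ∃ n, M < S n := by
    intro M
    have h1 : (∑' k, P (A k)) = ⨆ n, ∑ k ∈ range n, P (A k) := ENNReal.tsum_eq_iSup_nat
    have h2 : (⨆ n, ∑ k ∈ range n, P (A k)) = ⊤ := by rw [← h1]; exact htop
    have h3 : ENNReal.ofReal (max M 0) < ⨆ n, ∑ k ∈ range n, P (A k) := by
      rw [h2]; exact ENNReal.ofReal_lt_top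
    obtain ⟨n, hn⟩ := lt_iSup_iff.mp h3
    have hfin : (∑ k ∈ range n, P (A k)) ≠ ⊤ :=
      (ENNReal.sum_lt_top.mpr fun k _ => measure_lt_top P _).ne
    have h4 : max M 0 < (∑ k ∈ range n, P (A k)).toReal :=
      (ENNReal.ofReal_lt_iff_lt_toReal (le_max_right _ _) hfin).mp hn
    have hSn : S n = (∑ k ∈ range n, P (A k)).toReal :=
      (ENNReal.toReal_sum fun k _ => measure_ne_top P _).symm
    exact ⟨n, by rw [hSn]; exact (le_max_left M 0).trans_lt h4⟩
  -- the bad sets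
  set B : ℕ → Set Ω := fun m => ⋂ n, {ω | N n ω ≤ (m:ℝ)} with hB
  -- Chebyshev bound : P(B m) ≤ ofReal (4 / S n) whenever m ≤ S n / 2
  have hcheb : ∀ (m n : ℕ), (m:ℝ) ≤ S n / 2 → 0 < S n →
      P (B m) ≤ ENNReal.ofReal (4 / S n) := by
    intro m n hm hSpos
    have hc : 0 < S n / 2 := by linarith
    have key : P {ω | S n / 2 ≤ |N n ω - ∫ ω, N n ω ∂P|} ≤
        ENNReal.ofReal (variance (N n) P / (S n / 2) ^ 2) := by
      have := meas_ge_le_variance_div_sq (μ := P) (hNmem n) hc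
      simpa using this
    have hsub : B m ⊆ {ω | S n / 2 ≤ |N n ω - ∫ ω, N n ω ∂P|} := by
      intro ω hω
      have h1 : N n ω ≤ (m:ℝ) := Set.mem_iInter.mp hω n
      have h2 : N n ω ≤ S n / 2 := h1.trans hm
      rw [hNint n]
      have : S n / 2 ≤ S n - N n ω := by linarith
      calc S n / 2 ≤ S n - N n ω := this
        _ ≤ |S n - N n ω| := le_abs_self _
        _ = |N n ω - S n| := abs_sub_comm _ _
    have hfrac : variance (N n) P / (S n / 2) ^ 2 ≤ 4 / S n := by
      have h1 : variance (N n) P / (S n / 2) ^ 2 ≤ S n / (S n / 2) ^ 2 :=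
        div_le_div_of_nonneg_right (hvar n) (by positivity)
      have h2 : S n / (S n / 2) ^ 2 = 4 / S n := by
        field_simp; ring
      linarith [h1, h2.le, h2.ge]
    calc P (B m) ≤ P {ω | S n / 2 ≤ |N n ω - ∫ ω, N n ω ∂P|} := measure_mono hsub
      _ ≤ ENNReal.ofReal (variance (N n) P / (S n / 2) ^ 2) := key
      _ ≤ ENNReal.ofReal (4 / S n) := ENNReal.ofReal_le_ofReal hfrac
  -- hence each B m is null
  have hBzero : ∀ m, P (B m) = 0 := by
    intro m
    refine le_antisymm (ENNReal.le_of_forall_pos_le_add fun ε hε _ => ?_) zero_le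
    rw [zero_add]
    have hεR : (0:ℝ) < (ε:ℝ) := by exact_mod_cast hε
    obtain ⟨n, hSn⟩ := hSunbdd (max (2 * (m:ℝ)) (4 / (ε:ℝ)))
    have hSpos : 0 < S n := lt_of_lt_of_le (by positivity) ((le_max_right _ _).trans hSn.le)
    have hm : (m:ℝ) ≤ S n / 2 := by
      have := (le_max_left (2 * (m:ℝ)) (4 / (ε:ℝ))).trans hSn.le
      linarith
    have h4 : 4 / S n ≤ (ε:ℝ) := by
      have h5 : 4 / (ε:ℝ) < S n := lt_of_le_of_lt (le_max_right _ _) hSn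
      rw [div_le_iff₀ hSpos]
      have := (div_lt_iff₀ hεR).mp h5
      linarith
    calc P (B m) ≤ ENNReal.ofReal (4 / S n) := hcheb m n hm hSpos
      _ ≤ (ε : ℝ≥0∞) := ENNReal.ofReal_le_of_le_toReal (by simpa using h4)
  -- but a.s. ω lies in some B m, contradiction
  have hae : ∀ᵐ ω ∂P, ω ∈ ⋃ m, B m := by
    filter_upwards [hbound] with ω hω
    obtain ⟨m, hm⟩ := hω
    exact Set.mem_iUnion.mpr ⟨m, Set.mem_iInter.mpr fun n => hm n⟩
  have h0 : P (⋃ m, B m) = 0 := measure_iUnion_null hBzero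
  have hcompl : P ((⋃ m, B m)ᶜ) = 0 := by
    have h := MeasureTheory.ae_iff.mp hae
    have heq : (⋃ m, B m)ᶜ = {a | ∀ x : ℕ, a ∉ B x} := by
      ext a; simp [Set.mem_iUnion]
    rw [heq]; simpa [Set.mem_iUnion] using h
  have hcontra : (1:ℝ≥0∞) ≤ 0 := by
    have h3 := measure_union_le (μ := P) ((⋃ m, B m)ᶜ) (⋃ m, B m)
    rw [Set.compl_union_self] at h3
    rw [measure_univ, hcompl, h0] at h3
    simpa using h3
  simp at hcontra
end

section
/- Let (Ω, 𝒜, P) be a probability space and (λ_k)_{k≥0} a sequence of positive real-valued random variables (no independence assumed), and let (f_k)_{k≥0} be nonzero complex numbers with (log k)/(log|f_k|) → 0 as k → ∞. Let ρ ∈ (0, +∞) and suppose there exists a sequence (ε_k) of positive reals with ε_k → 0 such that ∑_{k=0}^∞ P{ω : λ_k(ω) ≥ (log|f_k|)/(ε_k − ρ)} < +∞. Then for almost every ω, for every real x < ρ the series ∑_{k=0}^∞ |f_k| e^{xλ_k(ω)} converges; that is, the abscissa of absolute convergence satisfies σ(f,ω) ≥ ρ almost surely. -/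
/-- Dirichlet series with random exponents (no independence assumed): if `ρ > 0` and there is
a sequence `ε_k → 0` of positive reals with `∑_k P{ω : λ_k(ω) ≥ (log|f_k|)/(ε_k − ρ)} < ∞`,
then almost surely the series converges absolutely at every real `x < ρ`,
i.e. `σ(f,ω) ≥ ρ` a.s. -/
theorem stmt_11 {Ω : Type*} [MeasurableSpace Ω] (P : MeasureTheory.Measure Ω)
    [MeasureTheory.IsProbabilityMeasure P]
    (l : ℕ → Ω → ℝ) (hlm : ∀ k, Measurable (l k)) (hlpos : ∀ k ω, 0 < l k ω)
    (f : ℕ → ℂ) (hf : ∀ k, f k ≠ 0)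
    (hcoef : Filter.Tendsto
      (fun k : ℕ => Real.log k / Real.log (‖f k‖)) Filter.atTop (nhds 0))
    (ρ : ℝ) (hρ : 0 < ρ)
    (ε : ℕ → ℝ) (hεpos : ∀ k, 0 < ε k) (hε0 : Filter.Tendsto ε Filter.atTop (nhds 0))
    (hsum : (∑' k : ℕ, P {ω | Real.log (‖f k‖) / (ε k - ρ) ≤ l k ω}) < ⊤) :
    ∀ᵐ ω ∂P, ∀ x : ℝ, x < ρ →
      Summable (fun k => ‖f k‖ * Real.exp (x * l k ω)) := by
  set s : ℕ → Set Ω := fun k => {ω | Real.log (‖f k‖) / (ε k - ρ) ≤ l k ω}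
  have hBC : P (Filter.limsup s Filter.atTop) = 0 :=
    MeasureTheory.measure_limsup_atTop_eq_zero hsum.ne
  have hae : ∀ᵐ ω ∂P, ω ∉ Filter.limsup s Filter.atTop :=
    MeasureTheory.measure_eq_zero_iff_ae_notMem.mp hBC
  filter_upwards [hae] with ω hω x hx
  -- eventually `l k ω < log |f k| / (ε k - ρ)`
  have hev : ∀ᶠ k in Filter.atTop, l k ω < Real.log (‖f k‖) / (ε k - ρ) := by
    have := hω
    rw [Filter.mem_limsup_iff_frequently_mem, Filter.not_frequently] at this
    filter_upwards [this] with k hk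
    exact lt_of_not_ge hk
  -- reduce to `y = max x 0 ∈ [0, ρ)`
  set y : ℝ := max x 0 with hy
  have hy0 : 0 ≤ y := le_max_right _ _
  have hyρ : y < ρ := max_lt hx hρ
  set δ : ℝ := (ρ - y) / 2 with hδ
  have hδpos : 0 < δ := by rw [hδ]; linarith
  set c : ℝ := δ / ρ with hc
  have hcpos : 0 < c := div_pos hδpos hρ
  -- eventual smallness of ε and largeness of |log |f k||
  have hevε' : ∀ᶠ k in Filter.atTop, ε k < δ :=
    Filter.Tendsto.eventually_lt_const hδpos hε0
  have hevlog : ∀ᶠ k : ℕ in Filter.atTop,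
      |Real.log (k : ℝ) / Real.log (‖f k‖)| < c / 2 := by
    have := hcoef.eventually (Metric.ball_mem_nhds (0 : ℝ) (by positivity : (0:ℝ) < c / 2))
    filter_upwards [this] with k hk
    simp only [Metric.mem_ball, Real.dist_eq, sub_zero] at hk
    exact hk
  have hevk : ∀ᶠ k : ℕ in Filter.atTop, (2 : ℕ) ≤ k := Filter.eventually_ge_atTop 2
  obtain ⟨N, hN⟩ := (hev.and (hevε'.and (hevlog.and hevk))).exists_forall_of_atTop
  -- key bound : for k ≥ N, the term is at most k ^ (-2)
  have key : ∀ k, N ≤ k →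
      ‖f k‖ * Real.exp (y * l k ω) ≤ (k : ℝ) ^ (-2 : ℝ) := by
    intro k hk
    obtain ⟨h1, h2, h3, h4⟩ := hN k hk
    have hlk := hlpos k ω
    have hεργ : ε k - ρ < 0 := by
      have : δ ≤ ρ := by
        rw [hδ]; nlinarith
      linarith
    -- from h1 and positivity of l k ω, log |f k| < 0
    have hBpos : 0 < Real.log (‖f k‖) / (ε k - ρ) := lt_trans hlk h1
    have hlogneg : Real.log (‖f k‖) < 0 := by
      by_contra h
      push_neg at h
      have : Real.log (‖f k‖) / (ε k - ρ) ≤ 0 :=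
        div_nonpos_of_nonneg_of_nonpos h hεργ.le
      linarith
    -- from h3 : |log k| < (c/2) * |log |f k||, so log |f k| < -(2/c) * log k
    have hlogk0 : (0:ℝ) < Real.log k := by
      have : (1:ℝ) < (k:ℝ) := by exact_mod_cast Nat.lt_of_lt_of_le Nat.one_lt_two h4
      exact Real.log_pos this
    have habs : |Real.log (‖f k‖)| = -Real.log (‖f k‖) :=
      abs_of_neg hlogneg
    have hpos : 0 < -Real.log (‖f k‖) := by linarith
    have h3' : Real.log (k : ℝ) < (c / 2) * (-Real.log (‖f k‖)) := by
      rw [abs_div, habs, abs_of_pos hlogk0, div_lt_iff₀ hpos] at h3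
      linarith [h3]
    -- hence log |f k| < -(2/c) * log k
    have hlogf : Real.log (‖f k‖) < -(2 / c) * Real.log k := by
      have h8 : (2 / c) * Real.log (k : ℝ) <
          (2 / c) * ((c / 2) * (-Real.log (‖f k‖))) :=
        mul_lt_mul_of_pos_left h3' (by positivity)
      have h9 : (2 / c) * ((c / 2) * (-Real.log (‖f k‖))) =
          -Real.log (‖f k‖) := by field_simp
      linarith
    -- bound y * l k ω
    have hyl : y * l k ω ≤ y * (Real.log (‖f k‖) / (ε k - ρ)) :=
      mul_le_mul_of_nonneg_left h1.le hy0
    -- ratio bound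
    have hratio : Real.log (‖f k‖) +
        y * (Real.log (‖f k‖) / (ε k - ρ)) ≤
        Real.log (‖f k‖) * c := by
      have hne : ε k - ρ ≠ 0 := ne_of_lt hεργ
      have heq : Real.log (‖f k‖) +
          y * (Real.log (‖f k‖) / (ε k - ρ)) =
          Real.log (‖f k‖) * ((ε k - ρ + y) / (ε k - ρ)) := by
        field_simp
      rw [heq]
      apply mul_le_mul_of_nonpos_left _ hlogneg.le
      -- c ≤ (ε k - ρ + y)/(ε k - ρ) , i.e. c ≤ (ρ - y - ε k)/(ρ - ε k)
      have h5 : (ε k - ρ + y) / (ε k - ρ) = (ρ - y - ε k) / (ρ - ε k) := by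
        rw [div_eq_div_iff hne (by linarith : ρ - ε k ≠ 0)]
        ring
      rw [h5]
      rw [hc, div_le_div_iff₀ hρ (by linarith : (0:ℝ) < ρ - ε k)]
      have hεk := hεpos k
      nlinarith
    have hfinal : Real.log (‖f k‖) + y * l k ω ≤ -2 * Real.log k := by
      have h6 : Real.log (‖f k‖) * c ≤ -(2 / c) * Real.log k * c := by
        apply mul_le_mul_of_nonneg_right hlogf.le hcpos.le
      have h7 : -(2 / c) * Real.log k * c = -2 * Real.log k := by
        field_simp
      linarith
    have hfabs : (0:ℝ) < ‖f k‖ := by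
      simpa [norm_pos_iff] using hf k
    calc ‖f k‖ * Real.exp (y * l k ω)
        = Real.exp (Real.log (‖f k‖) + y * l k ω) := by
          rw [Real.exp_add, Real.exp_log hfabs]
      _ ≤ Real.exp (-2 * Real.log k) := Real.exp_le_exp.mpr hfinal
      _ = (k : ℝ) ^ (-2 : ℝ) := by
          rw [Real.rpow_def_of_pos (by positivity : (0:ℝ) < (k:ℝ))]
          ring_nf
    -- done
  -- summability at `y`, then compare `x ≤ y`
  have hsy : Summable (fun k => ‖f k‖ * Real.exp (y * l k ω)) := by
    rw [← summable_nat_add_iff N]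
    have hbase : Summable (fun k : ℕ => ((k + N : ℕ) : ℝ) ^ (-2 : ℝ)) :=
      (summable_nat_add_iff (f := fun k : ℕ => (k : ℝ) ^ (-2 : ℝ)) N).mpr
        (Real.summable_nat_rpow.mpr (by norm_num))
    refine Summable.of_nonneg_of_le (fun k => by positivity) (fun k => ?_) hbase
    exact key (k + N) (Nat.le_add_left N k)
  refine Summable.of_nonneg_of_le (fun k => by positivity) (fun k => ?_) hsy
  have : x * l k ω ≤ y * l k ω :=
    mul_le_mul_of_nonneg_right (le_max_left x 0) (hlpos k ω).le
  exact mul_le_mul_of_nonneg_left (Real.exp_le_exp.mpr this) (norm_nonneg _)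
end

section
/- Let (Ω, 𝒜, P) be a probability space and (λ_k)_{k≥0} a sequence of positive real-valued random variables, and let (f_k)_{k≥0} be nonzero complex numbers with f_k → 0 and (log k)/(log|f_k|) → 0 as k → ∞. Let ρ > 0 and suppose there is a positive real-valued random variable b such that P{ω : λ_k(ω) < x} ≥ P{ω : b(ω) < x} for every x ≥ 0 and every k, and such that the expectation E[n_μ(ρ·b)] < +∞, where n_μ(t) = #{k : −log|f_k| ≤ t} is the counting function of the sequence μ_k = −log|f_k|. Then for almost every ω, for every real x < ρ the series ∑_{k=0}^∞ |f_k| e^{xλ_k(ω)} converges; that is, the abscissa of absolute convergence satisfies σ(f,ω) ≥ ρ almost surely. -/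
open scoped ENNReal
open Filter MeasureTheory

/-- Dirichlet series with random exponents: if `f_k → 0`, `ρ > 0`, there is a positive random
variable `b` with `P{λ_k < x} ≥ P{b < x}` for all `x ≥ 0` and all `k`, and the expectation
`E[n_μ(ρ·b)]` of the counting function `n_μ(t) = #{k : −log|f_k| ≤ t}` is finite, then almost
surely the series converges absolutely at every real `x < ρ`, i.e. `σ(f,ω) ≥ ρ` a.s. -/
theorem stmt_13 {Ω : Type*} [MeasurableSpace Ω] (P : MeasureTheory.Measure Ω)
    [MeasureTheory.IsProbabilityMeasure P]
    (l : ℕ → Ω → ℝ) (hlm : ∀ k, Measurable (l k)) (hlpos : ∀ k ω, 0 < l k ω)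
    (f : ℕ → ℂ) (hf : ∀ k, f k ≠ 0)
    (hf0 : Filter.Tendsto f Filter.atTop (nhds 0))
    (hcoef : Filter.Tendsto
      (fun k : ℕ => Real.log k / Real.log (‖f k‖)) Filter.atTop (nhds 0))
    (ρ : ℝ) (hρ : 0 < ρ)
    (b : Ω → ℝ) (hbm : Measurable b) (hbpos : ∀ ω, 0 < b ω)
    (hdom : ∀ x : ℝ, 0 ≤ x → ∀ k : ℕ, P {ω | b ω < x} ≤ P {ω | l k ω < x})
    (hexp : (∫⁻ ω, (Set.ncard {k : ℕ | -Real.log (‖f k‖) ≤ ρ * b ω} : ℝ≥0∞) ∂P)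
      < ⊤) :
    ∀ᵐ ω ∂P, ∀ x : ℝ, x < ρ →
      Summable (fun k => ‖f k‖ * Real.exp (x * l k ω)) := by
  classical
  set μ : ℕ → ℝ := fun k => -Real.log (‖f k‖) with hμdef
  have habspos : ∀ k, 0 < ‖f k‖ := fun k => by
    simpa using (hf k)
  -- μ tends to infinity
  have habs : Tendsto (fun k => ‖f k‖) atTop (nhdsWithin 0 (Set.Ioi 0)) := by
    apply tendsto_nhdsWithin_of_tendsto_nhds_of_eventually_within
    · exact tendsto_norm_zero.comp hf0
    · exact Filter.Eventually.of_forall fun k => habspos k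
  have hμtop : Tendsto μ atTop atTop := by
    have h1 : Tendsto (fun k => Real.log (‖f k‖)) atTop atBot :=
      Real.tendsto_log_nhdsGT_zero.comp habs
    exact Tendsto.comp tendsto_neg_atBot_atTop h1
  -- growth of μ compared to log
  have hgrow : ∀ C : ℝ, 0 < C → ∀ᶠ k : ℕ in atTop, C * Real.log k ≤ μ k := by
    intro C hC
    have h1 : ∀ᶠ k : ℕ in atTop, |Real.log k / Real.log (‖f k‖)| < 1 / C := by
      have h2 := hcoef.abs
      rw [abs_zero] at h2
      exact h2.eventually_lt_const (by positivity : (0:ℝ) < 1 / C)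
    filter_upwards [h1, hμtop.eventually_ge_atTop 1, eventually_ge_atTop 1] with k hk hμ1 hk1
    have hμpos : 0 < μ k := lt_of_lt_of_le one_pos hμ1
    have hlogk : 0 ≤ Real.log k := Real.log_nonneg (by exact_mod_cast hk1)
    have hdivlt : Real.log k / μ k < 1 / C := by
      have habs2 : |Real.log k / μ k| < 1 / C := by
        have : Real.log (‖f k‖) = -μ k := by rw [hμdef]; ring
        rw [this, div_neg, abs_neg] at hk
        exact hk
      calc Real.log k / μ k ≤ |Real.log k / μ k| := le_abs_self _
        _ < 1 / C := habs2
    have := (div_lt_div_iff₀ hμpos hC).mp hdivlt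
    nlinarith
  -- Borel-Cantelli setup
  set A : ℕ → Set Ω := fun k => {ω | μ k ≤ ρ * l k ω} with hAdef
  have hAm : ∀ k, MeasurableSet (A k) :=
    fun k => measurableSet_le measurable_const ((hlm k).const_mul ρ)
  set B : ℕ → Set Ω := fun k => {ω | μ k ≤ ρ * b ω} with hBdef
  have hBm : ∀ k, MeasurableSet (B k) :=
    fun k => measurableSet_le measurable_const (hbm.const_mul ρ)
  have key : ∀ k, 0 ≤ μ k → P (A k) ≤ P (B k) := by
    intro k hk
    have hA : A k = {ω | l k ω < μ k / ρ}ᶜ := by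
      ext ω
      simp only [hAdef, Set.mem_setOf_eq, Set.mem_compl_iff, not_lt, div_le_iff₀ hρ]
      rw [mul_comm]
    have hB : B k = {ω | b ω < μ k / ρ}ᶜ := by
      ext ω
      simp only [hBdef, Set.mem_setOf_eq, Set.mem_compl_iff, not_lt, div_le_iff₀ hρ]
      rw [mul_comm]
    rw [hA, hB, prob_compl_eq_one_sub (measurableSet_lt (hlm k) measurable_const),
      prob_compl_eq_one_sub (measurableSet_lt hbm measurable_const)]
    exact tsub_le_tsub_left (hdom (μ k / ρ) (div_nonneg hk hρ.le) k) 1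
  -- finiteness of the random counting set
  have hSfin : ∀ ω, ({k : ℕ | μ k ≤ ρ * b ω}).Finite := by
    intro ω
    obtain ⟨m, hm⟩ := (hμtop.eventually_gt_atTop (ρ * b ω)).exists_forall_of_atTop
    exact (Set.finite_Iio m).subset fun k hk => by
      by_contra h
      exact absurd (hm k (not_lt.mp h)) (not_lt.mpr hk)
  -- sum of measures of B equals the expectation
  have hBsum : ∑' k, P (B k) = ∫⁻ ω, (Set.ncard {k : ℕ | μ k ≤ ρ * b ω} : ℝ≥0∞) ∂P := by
    calc ∑' k, P (B k) = ∑' k, ∫⁻ ω, (B k).indicator 1 ω ∂P :=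
          tsum_congr fun k => (lintegral_indicator_one (hBm k)).symm
      _ = ∫⁻ ω, ∑' k, (B k).indicator 1 ω ∂P :=
          (lintegral_tsum fun k => (measurable_one.indicator (hBm k)).aemeasurable).symm
      _ = ∫⁻ ω, (Set.ncard {k : ℕ | μ k ≤ ρ * b ω} : ℝ≥0∞) ∂P := by
          refine lintegral_congr fun ω => ?_
          have hS := hSfin ω
          have hind : ∀ k, (B k).indicator (1 : Ω → ℝ≥0∞) ω
              = Set.indicator {k : ℕ | μ k ≤ ρ * b ω} (fun _ => (1:ℝ≥0∞)) k := by
            intro k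
            by_cases h : μ k ≤ ρ * b ω
            · simp [Set.indicator, hBdef, h]
            · simp [Set.indicator, hBdef, h]
          rw [tsum_congr hind, tsum_eq_sum (s := hS.toFinset)
            (fun k hk => Set.indicator_of_notMem (by simpa using hk) _)]
          rw [Finset.sum_congr rfl (fun k hk => Set.indicator_of_mem (by simpa using hk) _)]
          simp [Set.ncard_eq_toFinset_card _ hS]
  have hexp' : (∫⁻ ω, (Set.ncard {k : ℕ | μ k ≤ ρ * b ω} : ℝ≥0∞) ∂P) < ⊤ := hexp
  -- choose N with μ nonneg from N on
  obtain ⟨N, hN⟩ := (hμtop.eventually_ge_atTop 0).exists_forall_of_atTop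
  have hsum : ∑' k, P (A (k + N)) ≠ ∞ := by
    refine ne_of_lt (lt_of_le_of_lt ?_ hexp')
    calc ∑' k, P (A (k + N)) ≤ ∑' k, P (B (k + N)) :=
          ENNReal.tsum_le_tsum fun k => key _ (hN _ (Nat.le_add_left N k))
      _ ≤ ∑' k, P (B k) :=
          ENNReal.tsum_comp_le_tsum_of_injective (add_left_injective N) _
      _ = _ := hBsum
  -- Borel-Cantelli
  filter_upwards [MeasureTheory.ae_eventually_notMem hsum] with ω hω x hx
  obtain ⟨n₀, hn₀⟩ := hω.exists_forall_of_atTop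
  -- eventually ρ * l k ω < μ k
  have hev : ∀ᶠ k : ℕ in atTop, ρ * l k ω < μ k := by
    rw [eventually_atTop]
    refine ⟨n₀ + N, fun m hm => ?_⟩
    have h1 : m - N + N = m := Nat.sub_add_cancel (le_trans (Nat.le_add_left N n₀) hm)
    have h2 := hn₀ (m - N) (by omega)
    rw [h1] at h2
    simpa [hAdef, not_le] using h2
  set c : ℝ := max (x / ρ) 0 with hcdef
  have hc0 : 0 ≤ c := le_max_right _ _
  have hc1 : c < 1 := max_lt ((div_lt_one hρ).mpr hx) one_pos
  have h1c : 0 < 1 - c := by linarith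
  -- the eventual bound by k⁻²
  have hbound : ∀ᶠ k : ℕ in atTop,
      ‖f k‖ * Real.exp (x * l k ω) ≤ ((k : ℝ) ^ 2)⁻¹ := by
    filter_upwards [hev, hμtop.eventually_ge_atTop 0, hgrow (2 / (1 - c)) (by positivity),
      eventually_ge_atTop 1] with k hk hμ0 hgk hk1
    have hkpos : (0:ℝ) < k := by exact_mod_cast hk1
    have hxl : x * l k ω ≤ c * μ k := by
      rcases le_or_gt x 0 with hx0 | hx0
      · have : x * l k ω ≤ 0 := mul_nonpos_of_nonpos_of_nonneg hx0 (hlpos k ω).le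
        nlinarith
      · have hxρ : 0 < x / ρ := by positivity
        have : x * l k ω = (x / ρ) * (ρ * l k ω) := by field_simp
        rw [this]
        calc (x / ρ) * (ρ * l k ω) ≤ (x / ρ) * μ k :=
              mul_le_mul_of_nonneg_left hk.le hxρ.le
          _ ≤ c * μ k := mul_le_mul_of_nonneg_right (le_max_left _ _) hμ0
    have habseq : ‖f k‖ = Real.exp (-μ k) := by
      rw [hμdef, neg_neg, Real.exp_log (habspos k)]
    have h2log : 2 * Real.log k ≤ (1 - c) * μ k := by
      rw [div_mul_eq_mul_div] at hgk
      have := (div_le_iff₀ h1c).mp hgk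
      linarith
    calc ‖f k‖ * Real.exp (x * l k ω)
        = Real.exp (x * l k ω - μ k) := by rw [habseq, ← Real.exp_add]; ring_nf
      _ ≤ Real.exp (-(2 * Real.log k)) := by
          apply Real.exp_le_exp.mpr
          nlinarith
      _ = ((k : ℝ) ^ 2)⁻¹ := by
          have hlogsq : Real.log ((k:ℝ) ^ 2) = 2 * Real.log k := by
            rw [Real.log_pow]; norm_num
          rw [← hlogsq, Real.exp_neg, Real.exp_log (by positivity)]
  -- conclude summability by comparison
  have hgsum : Summable (fun k : ℕ => ((k : ℝ) ^ 2)⁻¹) := by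
    simpa [one_div] using summable_one_div_nat_pow.mpr one_lt_two
  refine summable_of_isBigO_nat hgsum (Asymptotics.IsBigO.of_bound 1 ?_)
  filter_upwards [hbound, eventually_ge_atTop 1] with k hk hk1
  have hkpos : (0:ℝ) < k := by exact_mod_cast hk1
  have hnn : 0 ≤ ‖f k‖ * Real.exp (x * l k ω) :=
    mul_nonneg (norm_nonneg _) (Real.exp_pos _).le
  rw [Real.norm_eq_abs, Real.norm_eq_abs, abs_of_nonneg hnn, abs_of_nonneg (by positivity)]
  linarith
end

section
/- Let (λ_k)_{k≥0} be a strictly increasing sequence of real numbers with λ_k > 0 for k ≥ 1, λ_k → +∞, and τ(Λ) = limsup_{k→∞} (log k)/λ_k < +∞. Let (Ω, 𝒜, P) be a probability space and (f_k)_{k≥0} complex-valued random variables such that the moduli (|f_k|)_{k≥0} are pairwise independent. Let ρ ∈ ℝ and assume that for almost every ω, for every real x < ρ the series ∑_{k=0}^∞ |f_k(ω)| e^{xλ_k} converges (i.e. the abscissa of absolute convergence σ(f,ω) ≥ ρ a.s.). Then for every ε > 0: ∑_{k=0}^∞ P{ω : |f_k(ω)| ≥ (e^{−ρ} + ε)^{λ_k}}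 < +∞. -/
open MeasureTheory Filter
open scoped ENNReal

/-- Bonferroni-type lower bound for unions of pairwise independent events. -/
lemma bonferroni_pairwise {Ω : Type*} [MeasurableSpace Ω] (P : MeasureTheory.Measure Ω)
    [MeasureTheory.IsProbabilityMeasure P] (A : ℕ → Set Ω) (hAm : ∀ k, MeasurableSet (A k))
    (hind : ∀ i j, i ≠ j → P (A i ∩ A j) = P (A i) * P (A j)) (B : Finset ℕ) :
    (∑ k ∈ B, (P (A k)).toReal) - (∑ k ∈ B, (P (A k)).toReal) ^ 2 / 2
      ≤ (P (⋃ k ∈ B, A k)).toReal := by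
  classical
  induction B using Finset.induction_on with
  | empty => simp
  | @insert a B ha ih =>
    set UB : Set Ω := ⋃ k ∈ B, A k with hUB
    have hUBm : MeasurableSet UB := B.measurableSet_biUnion (fun k _ => hAm k)
    have hUnion : (⋃ k ∈ insert a B, A k) = A a ∪ UB := Finset.set_biUnion_insert a B A
    have hkey : P (A a ∪ UB) + P (A a ∩ UB) = P (A a) + P UB :=
      measure_union_add_inter (A a) hUBm
    set S : ℝ := ∑ k ∈ B, (P (A k)).toReal with hS
    have hS0 : 0 ≤ S := Finset.sum_nonneg fun _ _ => ENNReal.toReal_nonneg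
    have hqa0 : 0 ≤ (P (A a)).toReal := ENNReal.toReal_nonneg
    -- intersection bound
    have hinter : P (A a ∩ UB) ≤ ∑ k ∈ B, P (A a) * P (A k) := by
      have h1 : A a ∩ UB = ⋃ k ∈ B, (A a ∩ A k) := by
        simp [hUB, Set.inter_iUnion]
      rw [h1]
      refine (measure_biUnion_finset_le B _).trans ?_
      refine Finset.sum_le_sum fun k hk => ?_
      rw [hind a k (fun h => ha (h ▸ hk))]
    have hfin : ∀ k ∈ B, P (A a) * P (A k) ≠ ⊤ :=
      fun k _ => ENNReal.mul_ne_top (measure_ne_top P _) (measure_ne_top P _)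
    have hinterR : (P (A a ∩ UB)).toReal ≤ (P (A a)).toReal * S := by
      have h2 : (∑ k ∈ B, P (A a) * P (A k)).toReal = (P (A a)).toReal * S := by
        rw [ENNReal.toReal_sum hfin, hS, Finset.mul_sum]
        exact Finset.sum_congr rfl fun k _ => ENNReal.toReal_mul
      calc (P (A a ∩ UB)).toReal
          ≤ (∑ k ∈ B, P (A a) * P (A k)).toReal :=
            ENNReal.toReal_mono
              (ENNReal.sum_lt_top.2 fun k hk => (hfin k hk).lt_top).ne hinter
        _ = (P (A a)).toReal * S := h2
    have hkeyR : (P (A a ∪ UB)).toReal + (P (A a ∩ UB)).toReal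
        = (P (A a)).toReal + (P UB).toReal := by
      rw [← ENNReal.toReal_add (measure_ne_top P _) (measure_ne_top P _),
        ← ENNReal.toReal_add (measure_ne_top P _) (measure_ne_top P _), hkey]
    rw [hUnion, Finset.sum_insert ha]
    have hir : 0 ≤ (P (A a ∩ UB)).toReal := ENNReal.toReal_nonneg
    nlinarith [ih, hinterR, hkeyR, hS0, hqa0, hir]

/-- Random Dirichlet series with deterministic increasing exponents and pairwise independent
moduli of coefficients: if `τ(Λ) = limsup (log k)/λ_k < +∞` and the abscissa of absolute
convergence satisfies `σ(f,ω) ≥ ρ` almost surely, then for every `ε > 0` the series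
`∑_k P{ω : |f_k(ω)| ≥ (e^{−ρ} + ε)^{λ_k}}` converges. -/
theorem stmt_14 {Ω : Type*} [MeasurableSpace Ω] (P : MeasureTheory.Measure Ω)
    [MeasureTheory.IsProbabilityMeasure P]
    (l : ℕ → ℝ) (hmono : StrictMono l) (hlpos : ∀ k, 1 ≤ k → 0 < l k)
    (hltop : Filter.Tendsto l Filter.atTop Filter.atTop)
    (htau : Filter.limsup (fun k : ℕ => ((Real.log k / l k : ℝ) : EReal)) Filter.atTop < ⊤)
    (f : ℕ → Ω → ℂ) (hfm : ∀ k, Measurable (f k))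
    (hindep : Pairwise (fun i j =>
      ProbabilityTheory.IndepFun (fun ω => ‖f i ω‖)
        (fun ω => ‖f j ω‖) P))
    (ρ : ℝ)
    (hconv : ∀ᵐ ω ∂P, ∀ x : ℝ, x < ρ →
      Summable (fun k => ‖f k ω‖ * Real.exp (x * l k))) :
    ∀ ε : ℝ, 0 < ε →
      (∑' k : ℕ, P {ω | (Real.exp (-ρ) + ε) ^ (l k) ≤ ‖f k ω‖}) < ⊤ := by
  intro ε hε
  by_contra hcontra
  have htot : (∑' k : ℕ, P {ω | (Real.exp (-ρ) + ε) ^ (l k) ≤ ‖f k ω‖}) = ⊤ :=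
    top_unique (not_lt.1 hcontra)
  set c : ℝ := Real.exp (-ρ) + ε with hcdef
  have hc0 : 0 < c := by positivity
  set A : ℕ → Set Ω := fun k => {ω | c ^ (l k) ≤ ‖f k ω‖} with hAdef
  have habsm : ∀ k, Measurable fun ω => ‖f k ω‖ := by
    intro k
    exact (hfm k).norm
  have hAm : ∀ k, MeasurableSet (A k) := fun k =>
    measurableSet_le measurable_const (habsm k)
  -- pairwise-independence of the events
  have hind : ∀ i j, i ≠ j → P (A i ∩ A j) = P (A i) * P (A j) := by
    intro i j hij
    have h := (ProbabilityTheory.indepFun_iff_indepSet_preimage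
      (habsm i) (habsm j)).1 (hindep hij)
      (Set.Ici (c ^ l i)) (Set.Ici (c ^ l j)) measurableSet_Ici measurableSet_Ici
    have hAi : A i = (fun ω => ‖f i ω‖) ⁻¹' Set.Ici (c ^ l i) := rfl
    have hAj : A j = (fun ω => ‖f j ω‖) ⁻¹' Set.Ici (c ^ l j) := rfl
    rw [hAi, hAj]
    exact h.measure_inter_eq_mul
  -- almost surely only finitely many events occur
  set x : ℝ := (ρ - Real.log c) / 2 with hxdef
  have hlogc : -ρ < Real.log c := by
    have : Real.exp (-ρ) < c := by simpa [hcdef] using lt_add_of_pos_right (Real.exp (-ρ)) hε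
    exact (Real.lt_log_iff_exp_lt hc0).2 this
  have hxρ : x < ρ := by rw [hxdef]; linarith
  have hcx : 1 ≤ c * Real.exp x := by
    have : c * Real.exp x = Real.exp (Real.log c + x) := by
      rw [Real.exp_add, Real.exp_log hc0]
    rw [this]
    have hpos : 0 ≤ Real.log c + x := by rw [hxdef]; linarith
    calc (1 : ℝ) = Real.exp 0 := by simp
      _ ≤ Real.exp (Real.log c + x) := Real.exp_le_exp.2 hpos
  have hae : ∀ᵐ ω ∂P, ∀ᶠ k in atTop, ω ∉ A k := by
    filter_upwards [hconv] with ω hω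
    have hsum := hω x hxρ
    have h0 : Tendsto (fun k => ‖f k ω‖ * Real.exp (x * l k)) atTop (nhds 0) :=
      hsum.tendsto_atTop_zero
    have hev : ∀ᶠ k in atTop, ‖f k ω‖ * Real.exp (x * l k) < 1 :=
      h0.eventually_lt_const one_pos
    filter_upwards [hev, eventually_ge_atTop 1] with k hk hk1
    intro hA
    have hlk : 0 ≤ l k := (hlpos k hk1).le
    have hterm : 1 ≤ ‖f k ω‖ * Real.exp (x * l k) := by
      have h1 : (c * Real.exp x) ^ (l k) ≤ ‖f k ω‖ * Real.exp (x * l k) := by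
        rw [Real.mul_rpow hc0.le (Real.exp_pos x).le, ← Real.exp_mul]
        exact mul_le_mul_of_nonneg_right hA (Real.exp_pos _).le
      exact le_trans (Real.one_le_rpow hcx hlk) h1
    exact absurd hterm (not_le.2 hk)
  -- tail unions
  set U : ℕ → Set Ω := fun n => ⋃ k, ⋃ (_ : n ≤ k), A k with hUdef
  have hUm : ∀ n, MeasurableSet (U n) := fun n =>
    MeasurableSet.iUnion fun k => MeasurableSet.iUnion fun _ => hAm k
  have hanti : Antitone U := by
    intro a b hab ω hω
    obtain ⟨k, hk, hAk⟩ := Set.mem_iUnion₂.1 hω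
    exact Set.mem_iUnion₂.2 ⟨k, hab.trans hk, hAk⟩
  have hInter : P (⋂ n, U n) = 0 := by
    have hsub : (⋂ n, U n) ⊆ {ω | ¬ ∀ᶠ k in atTop, ω ∉ A k} := by
      intro ω hω hev
      obtain ⟨N, hN⟩ := eventually_atTop.1 hev
      have := Set.mem_iInter.1 hω N
      obtain ⟨k, hk⟩ := Set.mem_iUnion.1 this
      obtain ⟨hNk, hAk⟩ := Set.mem_iUnion.1 hk
      exact hN k hNk hAk
    exact measure_mono_null hsub (ae_iff.1 hae)
  have htend : Tendsto (P ∘ U) atTop (nhds 0) := by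
    have := tendsto_measure_iInter_atTop (μ := P)
      (fun n => (hUm n).nullMeasurableSet) hanti ⟨0, measure_ne_top P _⟩
    rwa [hInter] at this
  obtain ⟨n, hn⟩ := (htend.eventually_lt_const
    (show (0 : ℝ≥0∞) < ENNReal.ofReal (1/8) from ENNReal.ofReal_pos.2 (by norm_num))).exists
  have hUn8 : (P (U n)).toReal < 1/8 := ENNReal.toReal_lt_of_lt_ofReal hn
  -- real partial sums
  set q : ℕ → ℝ := fun k => (P (A k)).toReal with hqdef
  have hq0 : ∀ k, 0 ≤ q k := fun k => ENNReal.toReal_nonneg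
  set s : ℕ → ℝ := fun m => ∑ k ∈ Finset.Ico n m, q k with hsdef
  have hofReal : ∀ B : Finset ℕ, (∑ k ∈ B, P (A k)) = ENNReal.ofReal (∑ k ∈ B, q k) := by
    intro B
    rw [ENNReal.ofReal_sum_of_nonneg fun k _ => hq0 k]
    exact Finset.sum_congr rfl fun k _ => (ENNReal.ofReal_toReal (measure_ne_top P _)).symm
  have hexists : ∃ m, 1/2 ≤ s m := by
    by_contra h'
    push_neg at h'
    have hbound : (∑' k : ℕ, P (A k)) ≤ (n : ℝ≥0∞) + ENNReal.ofReal (1/2) := by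
      rw [ENNReal.tsum_eq_iSup_sum]
      refine iSup_le fun F => ?_
      set M : ℕ := max (F.sup id + 1) n with hM
      have hFM : F ⊆ Finset.range M := by
        intro k hk
        refine Finset.mem_range.2 ?_
        calc k ≤ F.sup id := Finset.le_sup (f := id) hk
          _ < F.sup id + 1 := Nat.lt_succ_self _
          _ ≤ M := le_max_left _ _
      have hnM : n ≤ M := le_max_right _ _
      calc ∑ k ∈ F, P (A k) ≤ ∑ k ∈ Finset.range M, P (A k) :=
            Finset.sum_le_sum_of_subset hFM
        _ = ∑ k ∈ Finset.Ico 0 n, P (A k) + ∑ k ∈ Finset.Ico n M, P (A k) := by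
            rw [Finset.sum_Ico_consecutive _ (Nat.zero_le n) hnM, Finset.range_eq_Ico]
        _ ≤ (n : ℝ≥0∞) + ENNReal.ofReal (1/2) := by
            gcongr
            · calc ∑ k ∈ Finset.Ico 0 n, P (A k) ≤ ∑ _k ∈ Finset.Ico 0 n, (1 : ℝ≥0∞) :=
                  Finset.sum_le_sum fun k _ => prob_le_one
                _ = (n : ℝ≥0∞) := by simp
            · rw [hofReal]
              exact ENNReal.ofReal_le_ofReal (h' M).le
    rw [htot] at hbound
    exact absurd hbound (by simp [ENNReal.add_lt_top, lt_irrefl])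
  set m0 : ℕ := Nat.find hexists with hm0def
  have h12 : 1/2 ≤ s m0 := Nat.find_spec hexists
  have hnm0 : n < m0 := by
    by_contra h
    push_neg at h
    have : s m0 = 0 := by
      rw [hsdef]
      simp [Finset.Ico_eq_empty (not_lt.2 h)]
    rw [this] at h12; norm_num at h12
  have hm0pos : 1 ≤ m0 := by omega
  have hprev : s (m0 - 1) < 1/2 := by
    have := Nat.find_min hexists (m := m0 - 1) (by omega)
    linarith [not_le.1 this]
  have hstep : s m0 = s (m0 - 1) + q (m0 - 1) := by
    have h1 : n ≤ m0 - 1 := by omega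
    have h2 : m0 - 1 + 1 = m0 := by omega
    have h3 := Finset.sum_Ico_succ_top h1 q
    rw [h2] at h3
    exact h3
  have hqsmall : q (m0 - 1) ≤ (P (U n)).toReal := by
    refine ENNReal.toReal_mono (measure_ne_top P _) (measure_mono ?_)
    intro ω hω
    exact Set.mem_iUnion₂.2 ⟨m0 - 1, by omega, hω⟩
  have hS58 : s m0 ≤ 5/8 := by
    rw [hstep]
    linarith [hqsmall, hUn8]
  -- Bonferroni contradiction
  have hbon := bonferroni_pairwise P A hAm hind (Finset.Ico n m0)
  have hUnion_sub : (⋃ k ∈ Finset.Ico n m0, A k) ⊆ U n := by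
    intro ω hω
    obtain ⟨k, hk, hAk⟩ := Set.mem_iUnion₂.1 hω
    exact Set.mem_iUnion₂.2 ⟨k, (Finset.mem_Ico.1 hk).1, hAk⟩
  have hUnionR : (P (⋃ k ∈ Finset.Ico n m0, A k)).toReal ≤ (P (U n)).toReal :=
    ENNReal.toReal_mono (measure_ne_top P _) (measure_mono hUnion_sub)
  have hfinal : s m0 - (s m0)^2/2 < 1/8 := by
    calc s m0 - (s m0)^2/2 ≤ (P (⋃ k ∈ Finset.Ico n m0, A k)).toReal := hbon
      _ ≤ (P (U n)).toReal := hUnionR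
      _ < 1/8 := hUn8
  nlinarith [h12, hS58, hfinal]
end

section
/- Let (λ_k)_{k≥0} be a strictly increasing sequence of real numbers with λ_k > 0 for k ≥ 1 and λ_k → +∞. Let (Ω, 𝒜, P) be a probability space and (f_k)_{k≥0} complex-valued random variables such that the moduli (|f_k|)_{k≥0} are pairwise independent. Let ρ ∈ ℝ and suppose there is a sequence (δ_k) of positive reals with liminf_{k→∞} δ_k = e^{−ρ} such that ∑_{k=0}^∞ P{ω : |f_k(ω)| ≥ δ_k^{λ_k}} = +∞. Then for almost every ω, for every real x > ρ the series ∑_{k=0}^∞ |f_k(ω)| e^{xλ_k} diverges; that is, the abscissa of absolute convergence satisfies σ(f,ω) ≤ ρ almost surely. -/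
open MeasureTheory ProbabilityTheory Filter Finset
open scoped ENNReal NNReal

/-- Second Borel–Cantelli lemma for pairwise independent events (via Chebyshev). -/
lemma bc2_pairwise {Ω : Type*} [MeasurableSpace Ω] (P : Measure Ω)
    [IsProbabilityMeasure P] (s : ℕ → Set Ω) (hm : ∀ k, MeasurableSet (s k))
    (hind : Pairwise fun i j =>
      IndepFun ((s i).indicator (1 : Ω → ℝ)) ((s j).indicator (1 : Ω → ℝ)) P)
    (hdiv : (∑' k, P (s k)) = ⊤) :
    ∀ᵐ ω ∂P, ∃ᶠ k in atTop, ω ∈ s k := by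
  set X : ℕ → Ω → ℝ := fun k => (s k).indicator (1 : Ω → ℝ) with hX
  have hX2 : ∀ k, MemLp (X k) 2 P := fun k => (memLp_const (1 : ℝ)).indicator (hm k)
  have hXint : ∀ k, ∫ ω, X k ω ∂P = (P (s k)).toReal := fun k => integral_indicator_one (hm k)
  have hXsq : ∀ k, (X k) ^ 2 = X k := by
    intro k
    funext ω
    by_cases h : ω ∈ s k <;>
      simp [hX, Set.indicator_of_mem, Set.indicator_of_notMem, h]
  set m : ℕ → ℝ := fun n => ∑ k ∈ range n, (P (s k)).toReal with hmdef
  have hm_nonneg : ∀ k, (0:ℝ) ≤ (P (s k)).toReal := fun k => ENNReal.toReal_nonneg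
  -- partial sums are unbounded
  have hm_unbdd : ∀ M : ℝ, ∃ n, M ≤ m n := by
    intro M
    by_contra h
    push_neg at h
    have : (∑' k, P (s k)) ≤ ENNReal.ofReal M := by
      rw [ENNReal.tsum_eq_iSup_nat]
      refine iSup_le fun n => ?_
      have h1 : ∑ k ∈ range n, P (s k) = ENNReal.ofReal (m n) := by
        rw [hmdef, ENNReal.ofReal_sum_of_nonneg fun k _ => hm_nonneg k]
        exact Finset.sum_congr rfl fun k _ => (ENNReal.ofReal_toReal (measure_ne_top P _)).symm
      rw [h1]
      exact ENNReal.ofReal_le_ofReal (h n).le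
    rw [hdiv] at this
    exact (ENNReal.ofReal_lt_top.trans_le this).false
  -- expectations of partial sums
  have hES : ∀ n, ∫ ω, (∑ k ∈ range n, X k) ω ∂P = m n := by
    intro n
    have : ∫ ω, (∑ k ∈ range n, X k) ω ∂P = ∫ ω, ∑ k ∈ range n, X k ω ∂P := by
      simp [Finset.sum_apply]
    rw [this, integral_finset_sum _ fun k _ => (hX2 k).integrable one_le_two]
    exact Finset.sum_congr rfl fun k _ => hXint k
  -- variance bound
  have hvar : ∀ n, variance (∑ k ∈ range n, X k) P ≤ m n := by
    intro n
    rw [IndepFun.variance_sum (fun k _ => hX2 k) fun i _ j _ hij => hind hij]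
    refine Finset.sum_le_sum fun k _ => ?_
    calc variance (X k) P ≤ ∫ ω, ((X k) ^ 2) ω ∂P :=
          variance_le_expectation_sq (hX2 k).1
      _ = (P (s k)).toReal := by rw [hXsq k]; exact hXint k
  -- for each C, the event "all partial sums ≤ C" is null
  have key : ∀ C : ℕ, P {ω | ∀ n, ∑ k ∈ range n, X k ω ≤ (C:ℝ)} = 0 := by
    intro C
    set A := {ω | ∀ n, ∑ k ∈ range n, X k ω ≤ (C:ℝ)} with hA
    refine le_antisymm ?_ (zero_le)
    refine ENNReal.le_of_forall_pos_le_add fun ε hε _ => ?_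
    rw [zero_add]
    obtain ⟨n, hn⟩ := hm_unbdd (max (2 * ((C:ℝ) + 1)) (4 / ε))
    have hmn1 : 2 * ((C:ℝ) + 1) ≤ m n := le_trans (le_max_left _ _) hn
    have hmn2 : (4 / (ε:ℝ)) ≤ m n := le_trans (le_max_right _ _) hn
    have hC0 : (0:ℝ) ≤ (C:ℝ) := Nat.cast_nonneg C
    have hmnpos : (0:ℝ) < m n := by linarith
    have hc : (0:ℝ) < m n / 2 := by positivity
    have hsub : A ⊆ {ω | m n / 2 ≤ |(∑ k ∈ range n, X k) ω - ∫ ω, (∑ k ∈ range n, X k) ω ∂P|} := by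
      intro ω hω
      have h1 : ∑ k ∈ range n, X k ω ≤ (C:ℝ) := hω n
      have h2 : (∑ k ∈ range n, X k) ω = ∑ k ∈ range n, X k ω := by simp [Finset.sum_apply]
      rw [Set.mem_setOf_eq, hES n, h2]
      have hC : (C:ℝ) ≤ m n / 2 := by linarith
      have : m n / 2 ≤ m n - ∑ k ∈ range n, X k ω := by linarith
      calc m n / 2 ≤ m n - ∑ k ∈ range n, X k ω := this
        _ ≤ |m n - ∑ k ∈ range n, X k ω| := le_abs_self _
        _ = |∑ k ∈ range n, X k ω - m n| := abs_sub_comm _ _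
    calc P A ≤ P {ω | m n / 2 ≤ |(∑ k ∈ range n, X k) ω - ∫ ω, (∑ k ∈ range n, X k) ω ∂P|} :=
          measure_mono hsub
      _ ≤ ENNReal.ofReal (variance (∑ k ∈ range n, X k) P / (m n / 2) ^ 2) :=
          meas_ge_le_variance_div_sq (memLp_finset_sum' _ fun k _ => hX2 k) hc
      _ ≤ ENNReal.ofReal ((ε:ℝ)) := by
          refine ENNReal.ofReal_le_ofReal ?_
          have hεpos : (0:ℝ) < (ε:ℝ) := hε
          have h1 : variance (∑ k ∈ range n, X k) P / (m n / 2) ^ 2 ≤ m n / (m n / 2) ^ 2 :=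
            (div_le_div_iff_of_pos_right (by positivity : (0:ℝ) < (m n / 2) ^ 2)).mpr (hvar n)
          have h2 : m n / (m n / 2) ^ 2 = 4 / m n := by field_simp; ring
          have h4 : (4 / (ε:ℝ)) * (ε:ℝ) ≤ m n * (ε:ℝ) :=
            mul_le_mul_of_nonneg_right hmn2 hεpos.le
          rw [div_mul_cancel₀ _ hεpos.ne'] at h4
          have h3 : 4 / m n ≤ (ε:ℝ) := by
            rw [div_le_iff₀ hmnpos]
            linarith [mul_comm (m n) ((ε:ℝ))]
          linarith [h1, h2.symm.le, h2.le]
      _ = (ε : ℝ≥0∞) := ENNReal.ofReal_coe_nnreal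
  -- conclude
  rw [ae_iff]
  refine measure_mono_null ?_ (measure_iUnion_null fun C : ℕ => key C)
  intro ω hω
  simp only [Set.mem_setOf_eq, Filter.not_frequently, Filter.eventually_atTop] at hω
  obtain ⟨N, hN⟩ := hω
  refine Set.mem_iUnion.2 ⟨N, fun n => ?_⟩
  have hsub : ∀ k ∈ range n, k ∉ (range n).filter (· < N) → X k ω = 0 := by
    intro k hk hk'
    simp only [Finset.mem_filter, hk, true_and, not_lt] at hk'
    exact Set.indicator_of_notMem (hN k hk') _
  rw [← Finset.sum_subset (Finset.filter_subset _ _) hsub]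
  calc ∑ k ∈ (range n).filter (· < N), X k ω
      ≤ ((range n).filter (· < N)).card • (1:ℝ) := by
        refine Finset.sum_le_card_nsmul _ _ _ fun k _ => ?_
        by_cases h : ω ∈ s k <;> simp [hX, h]
    _ ≤ (N:ℝ) := by
        rw [nsmul_eq_mul, mul_one]
        have : (range n).filter (· < N) ⊆ range N := by
          intro k hk
          simp only [Finset.mem_filter] at hk
          exact Finset.mem_range.2 hk.2
        exact_mod_cast Nat.cast_le.2 ((Finset.card_le_card this).trans_eq (Finset.card_range N))

/-- Random Dirichlet series with deterministic increasing exponents and pairwise independent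
moduli of coefficients: if there is a sequence of positive reals `δ_k` with
`liminf δ_k = e^{−ρ}` and `∑_k P{ω : |f_k(ω)| ≥ δ_k^{λ_k}} = +∞`, then almost surely the
series diverges absolutely at every real `x > ρ`, i.e. `σ(f,ω) ≤ ρ` a.s. -/
theorem stmt_15 {Ω : Type*} [MeasurableSpace Ω] (P : MeasureTheory.Measure Ω)
    [MeasureTheory.IsProbabilityMeasure P]
    (l : ℕ → ℝ) (hmono : StrictMono l) (hlpos : ∀ k, 1 ≤ k → 0 < l k)
    (hltop : Filter.Tendsto l Filter.atTop Filter.atTop)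
    (f : ℕ → Ω → ℂ) (hfm : ∀ k, Measurable (f k))
    (hindep : Pairwise (fun i j =>
      ProbabilityTheory.IndepFun (fun ω => ‖f i ω‖)
        (fun ω => ‖f j ω‖) P))
    (ρ : ℝ) (δ : ℕ → ℝ) (hδpos : ∀ k, 0 < δ k)
    (hδlim : Filter.liminf (fun k => ((δ k : ℝ) : EReal)) Filter.atTop
      = ((Real.exp (-ρ) : ℝ) : EReal))
    (hdiv : (∑' k : ℕ, P {ω | (δ k) ^ (l k) ≤ ‖f k ω‖}) = ⊤) :
    ∀ᵐ ω ∂P, ∀ x : ℝ, ρ < x →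
      ¬ Summable (fun k => ‖f k ω‖ * Real.exp (x * l k)) := by
  set s : ℕ → Set Ω := fun k => {ω | (δ k) ^ (l k) ≤ ‖f k ω‖} with hs
  have habs : ∀ k, Measurable fun ω => ‖f k ω‖ :=
    fun k => continuous_norm.measurable.comp (hfm k)
  have hm : ∀ k, MeasurableSet (s k) := fun k => measurableSet_le measurable_const (habs k)
  have hind : Pairwise fun i j =>
      IndepFun ((s i).indicator (1 : Ω → ℝ)) ((s j).indicator (1 : Ω → ℝ)) P := by
    intro i j hij
    have hφ : ∀ k : ℕ, Measurable ((Set.Ici ((δ k) ^ (l k))).indicator (1 : ℝ → ℝ)) :=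
      fun k => measurable_const.indicator measurableSet_Ici
    have := (hindep hij).comp (hφ i) (hφ j)
    have heq : ∀ k : ℕ, ((Set.Ici ((δ k) ^ (l k))).indicator (1 : ℝ → ℝ)) ∘
        (fun ω => ‖f k ω‖) = (s k).indicator (1 : Ω → ℝ) := by
      intro k
      funext ω
      simp only [Function.comp_apply, Set.indicator_apply, Set.mem_Ici, hs, Set.mem_setOf_eq,
        Pi.one_apply]
    rwa [heq i, heq j] at this
  have hbc := bc2_pairwise P s hm hind hdiv
  filter_upwards [hbc] with ω hω x hx
  intro hsum
  -- eventually δ k > exp (-x)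
  have hlt : (((Real.exp (-x) : ℝ)) : EReal) <
      Filter.liminf (fun k => ((δ k : ℝ) : EReal)) Filter.atTop := by
    rw [hδlim]
    exact_mod_cast EReal.coe_lt_coe_iff.2 (Real.exp_lt_exp.2 (by linarith))
  have hev : ∀ᶠ k in atTop, Real.exp (-x) < δ k := by
    filter_upwards [Filter.eventually_lt_of_lt_liminf hlt] with k hk
    exact_mod_cast hk
  have hev' : ∀ᶠ k in atTop, Real.exp (-x) < δ k ∧ 1 ≤ k :=
    hev.and (Filter.eventually_ge_atTop 1)
  have hfreq : ∃ᶠ k in atTop, ω ∈ s k ∧ (Real.exp (-x) < δ k ∧ 1 ≤ k) := hω.and_eventually hev'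
  -- but summability forces terms to 0
  have h0 := hsum.tendsto_atTop_zero
  have hev0 : ∀ᶠ k in atTop, ‖f k ω‖ * Real.exp (x * l k) < 1 :=
    h0.eventually (eventually_lt_nhds (by norm_num : (0:ℝ) < 1))
  obtain ⟨k, ⟨hks, hkδ, hk1⟩, hk0⟩ := (hfreq.and_eventually hev0).exists
  have hl : 0 ≤ l k := (hlpos k hk1).le
  have h1 : (1:ℝ) ≤ δ k * Real.exp x := by
    have hne : Real.exp (-x) * Real.exp x = 1 := by
      rw [← Real.exp_add, neg_add_cancel, Real.exp_zero]
    have := mul_lt_mul_of_pos_right hkδ (Real.exp_pos x)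
    linarith
  have h2 : (1:ℝ) ≤ (δ k) ^ (l k) * Real.exp (x * l k) := by
    rw [Real.exp_mul, ← Real.mul_rpow (hδpos k).le (Real.exp_pos x).le]
    exact Real.one_le_rpow h1 hl
  have h3 : (δ k) ^ (l k) * Real.exp (x * l k) ≤ ‖f k ω‖ * Real.exp (x * l k) :=
    mul_le_mul_of_nonneg_right hks (Real.exp_pos _).le
  linarith
end

section
/- Let (Ω, 𝒜, P) be a probability space, (λ_k)_{k≥0} positive real-valued random variables and (f_k)_{k≥0} complex-valued random variables such that for every real x the sequence of real random variables (ω ↦ |f_k(ω)| e^{xλ_k(ω)})_{k≥0} is independent. Then the abscissa of absolute convergence is almost surely constant: there exists s in the extended reals such that for almost every ω, sup{x ∈ ℝ : ∑_{k=0}^∞ |f_k(ω)| e^{xλ_k(ω)} converges} = s (the supremum taken in the extended reals, with sup ∅ = −∞). -/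
open MeasureTheory ProbabilityTheory Filter

/-- The set where a sequence of nonnegative measurable functions is summable is measurable. -/
lemma measurableSet_summable_aux {Ω : Type*} {m : MeasurableSpace Ω} {g : ℕ → Ω → ℝ}
    (hg : ∀ k, Measurable[m] (g k)) (hnn : ∀ k ω, 0 ≤ g k ω) :
    MeasurableSet[m] {ω | Summable (fun k => g k ω)} := by
  have : {ω | Summable (fun k => g k ω)} =
      ⋃ M : ℕ, ⋂ n : ℕ, {ω | ∑ k ∈ Finset.range n, g k ω ≤ (M : ℝ)} := by
    ext ω
    simp only [Set.mem_setOf_eq, Set.mem_iUnion, Set.mem_iInter]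
    constructor
    · intro hs
      obtain ⟨M, hM⟩ := exists_nat_ge (∑' k, g k ω)
      exact ⟨M, fun n => le_trans (Summable.sum_le_tsum _ (fun k _ => hnn k ω) hs) hM⟩
    · rintro ⟨M, hM⟩
      exact summable_of_sum_range_le (fun k => hnn k ω) hM
  rw [this]
  exact MeasurableSet.iUnion fun M => MeasurableSet.iInter fun n =>
    measurableSet_le (Finset.measurable_sum _ fun k _ => hg k) measurable_const

/-- Kolmogorov 0-1 law for summability of independent nonnegative sequences. -/
lemma summable_zero_one {Ω : Type*} [m0 : MeasurableSpace Ω] (P : Measure Ω)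
    [IsProbabilityMeasure P] {X : ℕ → Ω → ℝ} (hX : ∀ k, Measurable (X k))
    (hnn : ∀ k ω, 0 ≤ X k ω)
    (hi : iIndepFun X P) :
    P {ω | Summable (fun k => X k ω)} = 0 ∨ P {ω | Summable (fun k => X k ω)} = 1 := by
  set s : ℕ → MeasurableSpace Ω := fun k => MeasurableSpace.comap (X k) Real.measurableSpace
  have h_le : ∀ k, s k ≤ m0 := fun k => (hX k).comap_le
  have h_indep : iIndep s P := hi
  refine measure_zero_or_one_of_measurableSet_limsup_atTop h_le h_indep ?_
  rw [limsup_eq_iInf_iSup_of_nat]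
  rw [MeasurableSpace.measurableSet_iInf]
  intro n
  have hmeas : ∀ k, Measurable[⨆ i ≥ n, s i] (X (n + k)) := by
    intro k
    have hle : s (n + k) ≤ ⨆ i ≥ n, s i := le_biSup s (Nat.le_add_right n k)
    exact (Measurable.of_comap_le le_rfl).mono hle le_rfl
  have hset : {ω | Summable (fun k => X k ω)} = {ω | Summable (fun k => X (n + k) ω)} := by
    ext ω
    simp only [Set.mem_setOf_eq]
    constructor
    · intro h
      have := (summable_nat_add_iff n).2 h
      simpa [Nat.add_comm] using this
    · intro h
      have : Summable (fun k => X (k + n) ω) := by simpa [Nat.add_comm] using h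
      exact (summable_nat_add_iff n).1 this
  rw [hset]
  exact measurableSet_summable_aux hmeas (fun k ω => hnn _ ω)

/-- Zero-one law for the abscissa of absolute convergence of a random Dirichlet series: if for
every real `x` the random variables `ω ↦ |f_k(ω)| e^{xλ_k(ω)}`, `k ≥ 0`, are independent,
then the abscissa of absolute convergence
`σ(f,ω) = sup{x ∈ ℝ : ∑_k |f_k(ω)| e^{xλ_k(ω)} < ∞}` (computed in the extended reals,
`sup ∅ = −∞`) is almost surely equal to a deterministic constant `s ∈ [−∞, +∞]`. -/
theorem stmt_19 {Ω : Type*} [MeasurableSpace Ω] (P : MeasureTheory.Measure Ω)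
    [MeasureTheory.IsProbabilityMeasure P]
    (l : ℕ → Ω → ℝ) (hlm : ∀ k, Measurable (l k)) (hlpos : ∀ k ω, 0 < l k ω)
    (f : ℕ → Ω → ℂ) (hfm : ∀ k, Measurable (f k))
    (hindep : ∀ x : ℝ,
      ProbabilityTheory.iIndepFun
        (fun k ω => ‖f k ω‖ * Real.exp (x * l k ω)) P) :
    ∃ s : EReal, ∀ᵐ ω ∂P,
      sSup {y : EReal | ∃ x : ℝ, y = (x : EReal) ∧
        Summable (fun k => ‖f k ω‖ * Real.exp (x * l k ω))} = s := by
  set X : ℝ → ℕ → Ω → ℝ := fun x k ω => ‖f k ω‖ * Real.exp (x * l k ω) with hXdef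
  have hXm : ∀ x k, Measurable (X x k) := fun x k =>
    (continuous_norm.measurable.comp (hfm k)).mul
      (Real.measurable_exp.comp (measurable_const.mul (hlm k)))
  have hnn : ∀ x k ω, 0 ≤ X x k ω := fun x k ω =>
    mul_nonneg (norm_nonneg _) (Real.exp_pos _).le
  -- monotonicity of summability
  have hmono : ∀ (x x' : ℝ) (ω : Ω), x' ≤ x → Summable (fun k => X x k ω) →
      Summable (fun k => X x' k ω) := by
    intro x x' ω hle hs
    refine Summable.of_nonneg_of_le (fun k => hnn x' k ω) (fun k => ?_) hs
    exact mul_le_mul_of_nonneg_left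
      (Real.exp_le_exp.2 (mul_le_mul_of_nonneg_right hle (hlpos k ω).le))
      (norm_nonneg _)
  -- 0-1 law at each rational
  have h01 : ∀ q : ℚ, P {ω | Summable (fun k => X (q : ℝ) k ω)} = 0 ∨
      P {ω | Summable (fun k => X (q : ℝ) k ω)} = 1 := fun q =>
    summable_zero_one P (hXm (q : ℝ)) (hnn (q : ℝ)) (hindep (q : ℝ))
  set s : EReal := sSup {y : EReal | ∃ q : ℚ, y = ((q : ℝ) : EReal) ∧
      P {ω | Summable (fun k => X (q : ℝ) k ω)} = 1} with hs
  refine ⟨s, ?_⟩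
  have hmeasA : ∀ q : ℚ, MeasurableSet {ω | Summable (fun k => X (q : ℝ) k ω)} := fun q =>
    measurableSet_summable_aux (hXm (q : ℝ)) (fun k ω => hnn _ k ω)
  have hae : ∀ᵐ ω ∂P, ∀ q : ℚ, (Summable (fun k => X (q : ℝ) k ω) ↔
      P {ω | Summable (fun k => X (q : ℝ) k ω)} = 1) := by
    rw [MeasureTheory.ae_all_iff]
    intro q
    rcases h01 q with h | h
    · have : ∀ᵐ ω ∂P, ¬ Summable (fun k => X (q : ℝ) k ω) := by
        rw [MeasureTheory.ae_iff]
        simpa using h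
      filter_upwards [this] with ω hω
      simp [hω, h]
    · have : ∀ᵐ ω ∂P, Summable (fun k => X (q : ℝ) k ω) := by
        rw [← MeasureTheory.prob_compl_eq_zero_iff (hmeasA q)] at h
        rw [MeasureTheory.ae_iff]
        exact h
      filter_upwards [this] with ω hω
      simp [hω, h]
  filter_upwards [hae] with ω hω
  apply le_antisymm
  · refine sSup_le ?_
    rintro y ⟨x, rfl, hx⟩
    by_contra hlt
    rw [not_le] at hlt
    obtain ⟨q, hsq, hqx⟩ := EReal.exists_rat_btwn_of_lt hlt
    have hqx' : (q : ℝ) < x := EReal.coe_lt_coe_iff.1 hqx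
    have hsum : Summable (fun k => X (q : ℝ) k ω) := hmono x (q : ℝ) ω hqx'.le hx
    have : ((q : ℝ) : EReal) ≤ s :=
      le_sSup ⟨q, rfl, (hω q).1 hsum⟩
    exact absurd this (not_le.2 hsq)
  · refine sSup_le ?_
    rintro y ⟨q, rfl, hq⟩
    exact le_sSup ⟨(q : ℝ), rfl, (hω q).2 hq⟩
end
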